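/- arXiv:1307.1952 — 3 statements merged into one kernel-verified Lean document; each statement's English description precedes it below -/
import Mathlib

section
/- For one-dimensional centered Gaussian densities: there is a constant depending only on lower and upper bounds 0 < m ≤ τ², τ̆² ≤ M such that sup over a ∈ ℝ of |∫_{−a}^{a} [φ(x; τ̆²) − φ(x; τ²)] dx| ≥ K·|τ̆² − τ²| whenever |τ̆² − τ²| is sufficiently small, where φ(·; v) is the N(0,v) density. -/
open Real MeasureTheory intervalIntegral

noncomputable def stmt6g (u : ℝ) : ℝ := (Real.sqrt (2 * π))⁻¹ * Real.exp (-(u ^ 2) / 2)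

lemma stmt6g_cont : Continuous stmt6g := by
  unfold stmt6g; fun_prop

lemma stmt6g_nonneg (u : ℝ) : 0 ≤ stmt6g u := by
  unfold stmt6g; positivity

lemma stmt6g_pos (u : ℝ) : 0 < stmt6g u := by
  unfold stmt6g
  have : (0:ℝ) < Real.sqrt (2 * π) := Real.sqrt_pos.2 (by positivity)
  positivity

lemma stmt6g_integrable : Integrable stmt6g := by
  unfold stmt6g
  apply Integrable.const_mul
  have h : (fun u : ℝ => Real.exp (-(u ^ 2) / 2)) = fun u : ℝ => Real.exp (-(2⁻¹ : ℝ) * u ^ 2) := by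
    funext u; ring_nf
  rw [h]
  exact integrable_exp_neg_mul_sq (by norm_num)

lemma stmt6g_integral : ∫ u, stmt6g u = 1 := by
  unfold stmt6g
  rw [MeasureTheory.integral_const_mul]
  have h : (fun u : ℝ => Real.exp (-(u ^ 2) / 2)) = fun u : ℝ => Real.exp (-(2⁻¹ : ℝ) * u ^ 2) := by
    funext u; ring_nf
  rw [h, integral_gaussian]
  rw [show π / (2⁻¹ : ℝ) = 2 * π by ring]
  rw [inv_mul_cancel₀ (ne_of_gt (Real.sqrt_pos.2 (by positivity)))]

lemma stmt6g_intInt (a b : ℝ) : IntervalIntegrable stmt6g volume a b :=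
  stmt6g_cont.intervalIntegrable a b

lemma stmt6_subst (a v : ℝ) (hv : 0 < v) :
    (∫ x in (-a)..a, (Real.sqrt (2 * π * v))⁻¹ * Real.exp (-(x ^ 2) / (2 * v))) =
    ∫ u in (-(a / Real.sqrt v))..(a / Real.sqrt v), stmt6g u := by
  have hsv : (0:ℝ) < Real.sqrt v := Real.sqrt_pos.2 hv
  have h1 : ∀ x : ℝ, (Real.sqrt (2 * π * v))⁻¹ * Real.exp (-(x ^ 2) / (2 * v)) =
      (Real.sqrt v)⁻¹ * stmt6g (x / Real.sqrt v) := by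
    intro x
    unfold stmt6g
    rw [show 2 * π * v = (2 * π) * v by ring, Real.sqrt_mul (by positivity), mul_inv]
    rw [div_pow, Real.sq_sqrt hv.le]
    ring_nf
  simp_rw [h1]
  rw [intervalIntegral.integral_const_mul]
  rw [intervalIntegral.integral_comp_div (fun u => stmt6g u) (ne_of_gt hsv)]
  rw [smul_eq_mul, ← mul_assoc, inv_mul_cancel₀ (ne_of_gt hsv), one_mul, neg_div]

lemma stmt6_bound1 (t : ℝ) : |∫ u in (-t)..t, stmt6g u| ≤ 1 := by
  rw [intervalIntegral_eq_integral_uIoc]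
  have h1 : |(if (-t : ℝ) ≤ t then (1:ℝ) else -1) • ∫ x in Set.uIoc (-t) t, stmt6g x|
      = |∫ x in Set.uIoc (-t) t, stmt6g x| := by
    split_ifs <;> simp
  rw [h1, abs_of_nonneg (setIntegral_nonneg measurableSet_uIoc fun x _ => stmt6g_nonneg x)]
  calc (∫ x in Set.uIoc (-t) t, stmt6g x) ≤ ∫ x, stmt6g x :=
        setIntegral_le_integral stmt6g_integrable (Filter.Eventually.of_forall stmt6g_nonneg)
    _ = 1 := stmt6g_integral

lemma stmt6_G_deriv (t : ℝ) :
    HasDerivAt (fun s => ∫ u in (-s)..s, stmt6g u) (2 * stmt6g t) t := by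
  have hG : ∀ x : ℝ, HasDerivAt (fun s => ∫ u in (0:ℝ)..s, stmt6g u) (stmt6g x) x := by
    intro x
    exact intervalIntegral.integral_hasDerivAt_right (stmt6g_intInt 0 x)
      stmt6g_cont.stronglyMeasurable.stronglyMeasurableAtFilter
      stmt6g_cont.continuousAt
  have key : HasDerivAt
      (fun s => (∫ u in (0:ℝ)..s, stmt6g u) - ∫ u in (0:ℝ)..(-s), stmt6g u)
      (stmt6g t - stmt6g (-t) * (-1)) t := by
    refine (hG t).sub ?_
    exact (hG (-t)).comp t (hasDerivAt_neg t)
  have heq : (fun s => (∫ u in (0:ℝ)..s, stmt6g u) - ∫ u in (0:ℝ)..(-s), stmt6g u)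
      = fun s => ∫ u in (-s)..s, stmt6g u := by
    funext s
    rw [intervalIntegral.integral_symm (-s) 0]
    rw [sub_neg_eq_add, add_comm]
    exact intervalIntegral.integral_add_adjacent_intervals (stmt6g_intInt _ _) (stmt6g_intInt _ _)
  rw [heq] at key
  have hval : stmt6g t - stmt6g (-t) * (-1) = 2 * stmt6g t := by
    unfold stmt6g; rw [neg_pow]; ring_nf
  rwa [hval] at key

lemma stmt6_F_deriv (a : ℝ) {s : ℝ} (hs : 0 < s) :
    HasDerivAt (fun s => ∫ u in (-(a / Real.sqrt s))..(a / Real.sqrt s), stmt6g u)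
      (2 * stmt6g (a / Real.sqrt s) * (a * (-(1 / (2 * Real.sqrt s)) / Real.sqrt s ^ 2))) s := by
  have hss : (0:ℝ) < Real.sqrt s := Real.sqrt_pos.2 hs
  have hinner : HasDerivAt (fun s : ℝ => a / Real.sqrt s)
      (a * (-(1 / (2 * Real.sqrt s)) / Real.sqrt s ^ 2)) s := by
    have h1 := ((Real.hasDerivAt_sqrt hs.ne').inv (ne_of_gt hss)).const_mul a
    simpa [div_eq_mul_inv] using h1
  have := (stmt6_G_deriv (a / Real.sqrt s)).comp s hinner
  exact this

lemma stmt6_mono {m a c : ℝ} (hm : 0 < m) (ha : 0 ≤ a) (hmc : m ≤ c) :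
    stmt6g (a / Real.sqrt m) ≤ stmt6g (a / Real.sqrt c) := by
  unfold stmt6g
  have hc : 0 < c := lt_of_lt_of_le hm hmc
  refine mul_le_mul_of_nonneg_left (Real.exp_le_exp.2 ?_) (by positivity)
  rw [div_pow, div_pow, Real.sq_sqrt hm.le, Real.sq_sqrt hc.le]
  have : a ^ 2 / c ≤ a ^ 2 / m := by gcongr
  linarith

lemma stmt6_mvt (m M a : ℝ) (hm : 0 < m) (hmM : m ≤ M) (ha : 0 < a) {p q : ℝ}
    (hp : p ∈ Set.Icc m M) (hq : q ∈ Set.Icc m M) (hpq : p < q) :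
    a * stmt6g (a / Real.sqrt m) / (M * Real.sqrt M) * (q - p)
      ≤ |(∫ u in (-(a / Real.sqrt q))..(a / Real.sqrt q), stmt6g u)
          - ∫ u in (-(a / Real.sqrt p))..(a / Real.sqrt p), stmt6g u| := by
  have hM : 0 < M := lt_of_lt_of_le hm hmM
  set F : ℝ → ℝ := fun s => ∫ u in (-(a / Real.sqrt s))..(a / Real.sqrt s), stmt6g u with hF
  set F' : ℝ → ℝ := fun s =>
    2 * stmt6g (a / Real.sqrt s) * (a * (-(1 / (2 * Real.sqrt s)) / Real.sqrt s ^ 2)) with hF'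
  have hder : ∀ x ∈ Set.Ioo p q, HasDerivAt F (F' x) x := fun x hx =>
    stmt6_F_deriv a (lt_of_lt_of_le hm (le_trans hp.1 hx.1.le))
  have hcont : ContinuousOn F (Set.Icc p q) := fun x hx =>
    (stmt6_F_deriv a (lt_of_lt_of_le hm (le_trans hp.1 hx.1))).continuousAt.continuousWithinAt
  obtain ⟨c, hc, hceq⟩ := exists_hasDerivAt_eq_slope F F' hpq hcont hder
  have hcm : m ≤ c := le_trans hp.1 hc.1.le
  have hcpos : 0 < c := lt_of_lt_of_le hm hcm
  have hcM : c ≤ M := le_trans hc.2.le hq.2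
  have hsc : (0:ℝ) < Real.sqrt c := Real.sqrt_pos.2 hcpos
  have h2 : F q - F p = F' c * (q - p) := by
    rw [hceq, div_mul_cancel₀ _ (sub_ne_zero.2 hpq.ne')]
  have hneg : -F' c = a * stmt6g (a / Real.sqrt c) / (c * Real.sqrt c) := by
    simp only [hF']
    rw [Real.sq_sqrt hcpos.le]
    field_simp
  have hK : a * stmt6g (a / Real.sqrt m) / (M * Real.sqrt M)
      ≤ a * stmt6g (a / Real.sqrt c) / (c * Real.sqrt c) := by
    apply div_le_div₀ (mul_nonneg ha.le (stmt6g_pos _).le)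
      (mul_le_mul_of_nonneg_left (stmt6_mono hm ha.le hcm) ha.le) (mul_pos hcpos hsc)
    have := Real.sqrt_le_sqrt hcM
    nlinarith [hsc]
  have h3 : F p - F q = (-F' c) * (q - p) := by rw [neg_mul]; linarith
  calc a * stmt6g (a / Real.sqrt m) / (M * Real.sqrt M) * (q - p)
      ≤ (-F' c) * (q - p) := by
        apply mul_le_mul_of_nonneg_right _ (by linarith)
        rw [hneg]; exact hK
    _ = F p - F q := h3.symm
    _ ≤ |F p - F q| := le_abs_self _
    _ = |F q - F p| := abs_sub_comm _ _

/-- For one-dimensional centered Gaussian densities with variances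
in a fixed compact interval `[m,M] ⊂ (0,∞)`, there are constants `K, ε > 0`
(depending only on `m, M`) such that whenever `|τ̆² − τ²| ≤ ε`,
`sup_{a} |∫_{-a}^{a} (φ(x;τ̆²) − φ(x;τ²)) dx| ≥ K |τ̆² − τ²|`. -/
theorem stmt6 (m M : ℝ) (hm : 0 < m) (hmM : m ≤ M) :
    ∃ K > (0 : ℝ), ∃ ε > (0 : ℝ), ∀ v w : ℝ,
      v ∈ Set.Icc m M → w ∈ Set.Icc m M → |w - v| ≤ ε →
      K * |w - v| ≤
        ⨆ a : ℝ, |∫ x in (-a)..a,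
          ((Real.sqrt (2 * π * w))⁻¹ * Real.exp (-(x ^ 2) / (2 * w)) -
            (Real.sqrt (2 * π * v))⁻¹ * Real.exp (-(x ^ 2) / (2 * v)))| := by
  have hM : 0 < M := lt_of_lt_of_le hm hmM
  set a₀ : ℝ := Real.sqrt M with ha₀def
  have ha₀ : 0 < a₀ := Real.sqrt_pos.2 hM
  refine ⟨a₀ * stmt6g (a₀ / Real.sqrt m) / (M * Real.sqrt M),
    div_pos (mul_pos ha₀ (stmt6g_pos _)) (mul_pos hM (Real.sqrt_pos.2 hM)), 1, one_pos, ?_⟩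
  intro v w hv hw _
  have hvpos : 0 < v := lt_of_lt_of_le hm hv.1
  have hwpos : 0 < w := lt_of_lt_of_le hm hw.1
  set f : ℝ → ℝ := fun a => |∫ x in (-a)..a,
          ((Real.sqrt (2 * π * w))⁻¹ * Real.exp (-(x ^ 2) / (2 * w)) -
            (Real.sqrt (2 * π * v))⁻¹ * Real.exp (-(x ^ 2) / (2 * v)))| with hfdef
  have hInt : ∀ u : ℝ, 0 < u → ∀ a b : ℝ, IntervalIntegrable
      (fun x => (Real.sqrt (2 * π * u))⁻¹ * Real.exp (-(x ^ 2) / (2 * u))) volume a b := by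
    intro u hu a b
    apply Continuous.intervalIntegrable
    fun_prop
  have hsplit : ∀ a : ℝ, (∫ x in (-a)..a,
      ((Real.sqrt (2 * π * w))⁻¹ * Real.exp (-(x ^ 2) / (2 * w)) -
        (Real.sqrt (2 * π * v))⁻¹ * Real.exp (-(x ^ 2) / (2 * v)))) =
      (∫ u in (-(a / Real.sqrt w))..(a / Real.sqrt w), stmt6g u) -
        ∫ u in (-(a / Real.sqrt v))..(a / Real.sqrt v), stmt6g u := by
    intro a
    rw [intervalIntegral.integral_sub (hInt w hwpos _ _) (hInt v hvpos _ _),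
      stmt6_subst a w hwpos, stmt6_subst a v hvpos]
  have hboundf : ∀ a : ℝ, f a ≤ 2 := by
    intro a
    rw [hfdef]
    simp only
    rw [hsplit a]
    calc |(∫ u in (-(a / Real.sqrt w))..(a / Real.sqrt w), stmt6g u) -
            ∫ u in (-(a / Real.sqrt v))..(a / Real.sqrt v), stmt6g u|
        ≤ |∫ u in (-(a / Real.sqrt w))..(a / Real.sqrt w), stmt6g u| +
            |∫ u in (-(a / Real.sqrt v))..(a / Real.sqrt v), stmt6g u| := abs_sub _ _
      _ ≤ 1 + 1 := add_le_add (stmt6_bound1 _) (stmt6_bound1 _)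
      _ = 2 := by norm_num
  have hbdd : BddAbove (Set.range f) := ⟨2, by rintro _ ⟨a, rfl⟩; exact hboundf a⟩
  have hle : f a₀ ≤ ⨆ a, f a := le_ciSup hbdd a₀
  have hfa : f a₀ = |(∫ u in (-(a₀ / Real.sqrt w))..(a₀ / Real.sqrt w), stmt6g u) -
      ∫ u in (-(a₀ / Real.sqrt v))..(a₀ / Real.sqrt v), stmt6g u| := by
    rw [hfdef]; simp only; rw [hsplit a₀]
  rcases lt_trichotomy v w with h | h | h
  · rw [abs_of_pos (sub_pos.2 h)]
    refine le_trans ?_ hle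
    rw [hfa]
    exact stmt6_mvt m M a₀ hm hmM ha₀ hv hw h
  · subst h
    simp only [sub_self, abs_zero, mul_zero]
    exact le_trans (abs_nonneg _) hle
  · rw [abs_of_neg (sub_neg.2 h)]
    refine le_trans ?_ hle
    rw [hfa, abs_sub_comm, neg_sub]
    exact stmt6_mvt m M a₀ hm hmM ha₀ hw hv h
end

section
/- For q-dimensional centered Gaussian measures: if Σ₁ and Σ₂ are q×q symmetric positive definite matrices with eigenvalues in [m, M] ⊂ (0,∞), then the total variation distance ∫_{ℝ^q} |φ(x; Σ₁) − φ(x; Σ₂)| dx ≤ K(q,m,M)·‖Σ₁ − Σ₂‖, where ‖·‖ is any fixed matrix norm and φ(·;Σ) the N(0,Σ) density. -/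
open Matrix Real MeasureTheory


lemma cs_dot {q : ℕ} (x y : Fin q → ℝ) :
    |x ⬝ᵥ y| ≤ Real.sqrt (∑ i, x i ^ 2) * Real.sqrt (∑ i, y i ^ 2) := by
  have h := Finset.sum_mul_sq_le_sq_mul_sq Finset.univ x y
  have : |x ⬝ᵥ y| = Real.sqrt ((x ⬝ᵥ y) ^ 2) := (Real.sqrt_sq_eq_abs _).symm
  rw [this, ← Real.sqrt_mul (by positivity)]
  exact Real.sqrt_le_sqrt (by simpa [dotProduct] using h)

lemma sq_mulVec_le {q : ℕ} (A : Matrix (Fin q) (Fin q) ℝ) (v : Fin q → ℝ) :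
    ∑ i, (A *ᵥ v) i ^ 2 ≤ (∑ i, ∑ j, A i j ^ 2) * ∑ j, v j ^ 2 := by
  rw [Finset.sum_mul]
  apply Finset.sum_le_sum
  intro i _
  simpa [Matrix.mulVec, dotProduct] using
    Finset.sum_mul_sq_le_sq_mul_sq Finset.univ (A i) v

lemma frob_bound {q : ℕ} (A : Matrix (Fin q) (Fin q) ℝ) (u v : Fin q → ℝ) :
    |u ⬝ᵥ (A *ᵥ v)| ≤ Real.sqrt (∑ i, ∑ j, A i j ^ 2) *
      (Real.sqrt (∑ i, u i ^ 2) * Real.sqrt (∑ i, v i ^ 2)) := by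
  calc |u ⬝ᵥ (A *ᵥ v)| ≤ Real.sqrt (∑ i, u i ^ 2) * Real.sqrt (∑ i, (A *ᵥ v) i ^ 2) :=
        cs_dot u (A *ᵥ v)
    _ ≤ Real.sqrt (∑ i, u i ^ 2) *
        (Real.sqrt (∑ i, ∑ j, A i j ^ 2) * Real.sqrt (∑ j, v j ^ 2)) := by
        gcongr
        rw [← Real.sqrt_mul (by positivity)]
        exact Real.sqrt_le_sqrt (sq_mulVec_le A v)
    _ = _ := by ring


lemma bilin_cs {q : ℕ} (S : Matrix (Fin q) (Fin q) ℝ) (hs : S.IsSymm)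
    (hpsd : ∀ z : Fin q → ℝ, 0 ≤ z ⬝ᵥ (S *ᵥ z)) (x y : Fin q → ℝ) :
    (x ⬝ᵥ (S *ᵥ y)) ^ 2 ≤ (x ⬝ᵥ (S *ᵥ x)) * (y ⬝ᵥ (S *ᵥ y)) := by
  have hsym : ∀ u v : Fin q → ℝ, u ⬝ᵥ (S *ᵥ v) = v ⬝ᵥ (S *ᵥ u) := by
    intro u v
    rw [Matrix.dotProduct_mulVec, dotProduct_comm, ← Matrix.mulVec_transpose, hs.eq]
  have h : ∀ t : ℝ, 0 ≤ (y ⬝ᵥ (S *ᵥ y)) * (t * t) + (2 * (x ⬝ᵥ (S *ᵥ y))) * t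
      + (x ⬝ᵥ (S *ᵥ x)) := by
    intro t
    have := hpsd (x + t • y)
    have e : (x + t • y) ⬝ᵥ (S *ᵥ (x + t • y)) =
        (y ⬝ᵥ (S *ᵥ y)) * (t * t) + (2 * (x ⬝ᵥ (S *ᵥ y))) * t + (x ⬝ᵥ (S *ᵥ x)) := by
      rw [Matrix.mulVec_add, Matrix.mulVec_smul, add_dotProduct, smul_dotProduct,
        dotProduct_add, dotProduct_add, dotProduct_smul,
        dotProduct_smul]
      rw [hsym y x]
      simp [smul_eq_mul]
      ring
    linarith [e ▸ this]
  have hd := discrim_le_zero h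
  rw [discrim] at hd
  nlinarith [hd]


lemma isHermitian_of_isSymm {q : ℕ} (S : Matrix (Fin q) (Fin q) ℝ) (hs : S.IsSymm) :
    S.IsHermitian := by
  rw [Matrix.IsHermitian, Matrix.conjTranspose]
  convert hs.eq using 1
  ext i j
  simp

lemma det_bounds {q : ℕ} {m M : ℝ} (hm : 0 < m) (S : Matrix (Fin q) (Fin q) ℝ)
    (hs : S.IsSymm)
    (hb : ∀ x : Fin q → ℝ, m * ∑ i, x i ^ 2 ≤ x ⬝ᵥ (S *ᵥ x) ∧
        x ⬝ᵥ (S *ᵥ x) ≤ M * ∑ i, x i ^ 2) :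
    m ^ q ≤ S.det ∧ S.det ≤ M ^ q := by
  have hA : S.IsHermitian := isHermitian_of_isSymm S hs
  have hev : ∀ i, m ≤ hA.eigenvalues i ∧ hA.eigenvalues i ≤ M := by
    intro i
    have hunit : ∑ j, (hA.eigenvectorBasis i : Fin q → ℝ) j ^ 2 = 1 := by
      have hn : ‖hA.eigenvectorBasis i‖ = 1 := hA.eigenvectorBasis.orthonormal.1 i
      have := EuclideanSpace.norm_eq (hA.eigenvectorBasis i)
      rw [hn] at this
      have h2 : Real.sqrt (∑ j, ‖(hA.eigenvectorBasis i : Fin q → ℝ) j‖ ^ 2) = 1 := this.symm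
      have := congrArg (fun t => t ^ 2) h2
      simp only [Real.sq_sqrt (by positivity : (0:ℝ) ≤ ∑ j, ‖(hA.eigenvectorBasis i : Fin q → ℝ) j‖ ^ 2)] at this
      simpa [Real.norm_eq_abs, sq_abs] using this
    have heq : hA.eigenvalues i =
        (hA.eigenvectorBasis i : Fin q → ℝ) ⬝ᵥ (S *ᵥ (hA.eigenvectorBasis i : Fin q → ℝ)) := by
      simpa using hA.eigenvalues_eq i
    constructor
    · have := (hb (hA.eigenvectorBasis i : Fin q → ℝ)).1
      rw [hunit, mul_one] at this; rw [heq]; exact this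
    · have := (hb (hA.eigenvectorBasis i : Fin q → ℝ)).2
      rw [hunit, mul_one] at this; rw [heq]; exact this
  have hdet : S.det = ∏ i, hA.eigenvalues i := by
    simpa using hA.det_eq_prod_eigenvalues
  constructor
  · rw [hdet]
    calc m ^ q = ∏ _i : Fin q, m := by simp
      _ ≤ ∏ i, hA.eigenvalues i :=
        Finset.prod_le_prod (fun i _ => le_of_lt hm) (fun i _ => (hev i).1)
  · rw [hdet]
    calc (∏ i, hA.eigenvalues i) ≤ ∏ _i : Fin q, M :=
        Finset.prod_le_prod (fun i _ => le_trans (le_of_lt hm) (hev i).1) (fun i _ => (hev i).2)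
      _ = M ^ q := by simp


lemma det_abs_le {q : ℕ} (A : Fin q → Fin q → ℝ) :
    ‖Matrix.detRowAlternating (A : Fin q → Fin q → ℝ)‖ ≤
      (q.factorial : ℝ) * ∏ i, ‖A i‖ := by
  rw [Matrix.detRowAlternating]
  show ‖Matrix.det (Matrix.of A)‖ ≤ _
  rw [Matrix.det_apply]
  calc ‖∑ σ : Equiv.Perm (Fin q), Equiv.Perm.sign σ • ∏ i, Matrix.of A (σ i) i‖
      ≤ ∑ σ : Equiv.Perm (Fin q), ‖Equiv.Perm.sign σ • ∏ i, Matrix.of A (σ i) i‖ :=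
        norm_sum_le _ _
    _ ≤ ∑ σ : Equiv.Perm (Fin q), ∏ i, ‖A i‖ := by
        apply Finset.sum_le_sum
        intro σ _
        have hsmul : ‖Equiv.Perm.sign σ • ∏ i, Matrix.of A (σ i) i‖ =
            ‖∏ i, Matrix.of A (σ i) i‖ := by
          rcases Int.units_eq_one_or (Equiv.Perm.sign σ) with h | h <;>
            simp [h, Units.smul_def, norm_neg]
        rw [hsmul]
        calc ‖∏ i, Matrix.of A (σ i) i‖
            ≤ ∏ i, ‖A (σ i)‖ := by
              rw [norm_prod]
              apply Finset.prod_le_prod (fun i _ => norm_nonneg _)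
              intro i _
              exact norm_le_pi_norm (A (σ i)) i
          _ = ∏ i, ‖A i‖ := Equiv.prod_comp σ (fun i => ‖A i‖)
    _ = (q.factorial : ℝ) * ∏ i, ‖A i‖ := by
        rw [Finset.sum_const, Finset.card_univ, Fintype.card_perm, nsmul_eq_mul]
        simp

lemma det_lipschitz {q : ℕ} {R : ℝ} (hR : 0 ≤ R) (A B : Matrix (Fin q) (Fin q) ℝ)
    (hA : ∀ i j, |A i j| ≤ R) (hB : ∀ i j, |B i j| ≤ R) :
    |A.det - B.det| ≤ (q.factorial : ℝ) * q * R ^ (q - 1) *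
      Real.sqrt (∑ i, ∑ j, (A i j - B i j) ^ 2) := by
  let A' : Fin q → Fin q → ℝ := fun i j => A i j
  let B' : Fin q → Fin q → ℝ := fun i j => B i j
  have hC : (0:ℝ) ≤ (q.factorial : ℝ) := by positivity
  have key := (Matrix.detRowAlternating (R := ℝ) (n := Fin q)).toMultilinearMap.norm_image_sub_le_of_bound
    hC (fun mm => det_abs_le mm) A' B'
  rw [show ((Matrix.detRowAlternating (R := ℝ) (n := Fin q)).toMultilinearMap A') = A.det from rfl,
      show ((Matrix.detRowAlternating (R := ℝ) (n := Fin q)).toMultilinearMap B') = B.det from rfl] at key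
  have hnormA : ‖A'‖ ≤ R := by
    apply pi_norm_le_iff_of_nonneg hR |>.2
    intro i
    apply pi_norm_le_iff_of_nonneg hR |>.2
    intro j
    exact hA i j
  have hnormB : ‖B'‖ ≤ R := by
    apply pi_norm_le_iff_of_nonneg hR |>.2
    intro i
    apply pi_norm_le_iff_of_nonneg hR |>.2
    intro j
    exact hB i j
  have hmax : max ‖A'‖ ‖B'‖ ≤ R := max_le hnormA hnormB
  have hdiff : ‖A' - B'‖ ≤ Real.sqrt (∑ i, ∑ j, (A i j - B i j) ^ 2) := by
    apply pi_norm_le_iff_of_nonneg (Real.sqrt_nonneg _) |>.2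
    intro i
    apply pi_norm_le_iff_of_nonneg (Real.sqrt_nonneg _) |>.2
    intro j
    show |A i j - B i j| ≤ _
    rw [← Real.sqrt_sq_eq_abs]
    apply Real.sqrt_le_sqrt
    calc (A i j - B i j) ^ 2 ≤ ∑ j', (A i j' - B i j') ^ 2 :=
          Finset.single_le_sum (f := fun j' => (A i j' - B i j') ^ 2) (fun j' _ => sq_nonneg _) (Finset.mem_univ j)
      _ ≤ ∑ i', ∑ j', (A i' j' - B i' j') ^ 2 :=
          Finset.single_le_sum (f := fun i' => ∑ j', (A i' j' - B i' j') ^ 2)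
            (fun i' _ => by positivity) (Finset.mem_univ i)
  calc |A.det - B.det| = ‖A.det - B.det‖ := rfl
    _ ≤ (q.factorial : ℝ) * (Fintype.card (Fin q)) *
        max ‖A'‖ ‖B'‖ ^ (Fintype.card (Fin q) - 1) * ‖A' - B'‖ := key
    _ ≤ (q.factorial : ℝ) * q * R ^ (q - 1) * Real.sqrt (∑ i, ∑ j, (A i j - B i j) ^ 2) := by
        simp only [Fintype.card_fin]
        gcongr <;>
          first
          | exact le_trans (norm_nonneg _) hnormA
          | exact hmax
          | exact hdiff
          | positivity


lemma integrable_gauss_pi {q : ℕ} {c : ℝ} (hc : 0 < c) :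
    Integrable (fun x : Fin q → ℝ => Real.exp (-c * ∑ i, x i ^ 2)) := by
  have : (fun x : Fin q → ℝ => Real.exp (-c * ∑ i, x i ^ 2)) =
      fun x : Fin q → ℝ => ∏ i, Real.exp (-c * x i ^ 2) := by
    funext x
    rw [← Real.exp_sum, Finset.mul_sum]
  rw [this]
  exact Integrable.fintype_prod (fun _ => integrable_exp_neg_mul_sq hc)

lemma integrable_sq_one_dim {c : ℝ} (hc : 0 < c) :
    Integrable (fun t : ℝ => t ^ 2 * Real.exp (-c * t ^ 2)) := by
  have := integrable_rpow_mul_exp_neg_mul_sq hc (by norm_num : (-1:ℝ) < 2)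
  convert this using 2 with t
  rw [show ((2:ℝ) = ((2:ℕ):ℝ)) by norm_num, Real.rpow_natCast]

lemma integrable_sq_gauss_pi {q : ℕ} {c : ℝ} (hc : 0 < c) :
    Integrable (fun x : Fin q → ℝ => (∑ i, x i ^ 2) * Real.exp (-c * ∑ i, x i ^ 2)) := by
  have key : (fun x : Fin q → ℝ => (∑ i, x i ^ 2) * Real.exp (-c * ∑ i, x i ^ 2)) =
      fun x : Fin q → ℝ => ∑ i, ∏ j, (if j = i then x j ^ 2 * Real.exp (-c * x j ^ 2)
        else Real.exp (-c * x j ^ 2)) := by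
    funext x
    rw [Finset.sum_mul]
    congr 1
    funext i
    rw [show (-c * ∑ j, x j ^ 2) = ∑ j, (-c * x j ^ 2) by rw [Finset.mul_sum],
      Real.exp_sum]
    have : ∀ j : Fin q, (if j = i then x j ^ 2 * Real.exp (-c * x j ^ 2)
        else Real.exp (-c * x j ^ 2)) =
        (if j = i then x j ^ 2 else 1) * Real.exp (-c * x j ^ 2) := by
      intro j; by_cases h : j = i <;> simp [h]
    rw [Finset.prod_congr rfl (fun j _ => this j), Finset.prod_mul_distrib,
      Finset.prod_ite_eq' Finset.univ i (fun j => x j ^ 2)]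
    simp
  rw [key]
  apply integrable_finset_sum
  intro i _
  have hg : ∀ j : Fin q, Integrable (fun t : ℝ => if j = i then t ^ 2 * Real.exp (-c * t ^ 2)
      else Real.exp (-c * t ^ 2)) := by
    intro j
    by_cases h : j = i <;> simp only [h, if_true, if_false]
    · exact integrable_sq_one_dim hc
    · exact integrable_exp_neg_mul_sq hc
  exact Integrable.fintype_prod (f := fun j t => if j = i then t ^ 2 * Real.exp (-c * t ^ 2)
    else Real.exp (-c * t ^ 2)) hg


lemma exp_lip {t u v : ℝ} (hu : t ≤ u) (hv : t ≤ v) :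
    |Real.exp (-u) - Real.exp (-v)| ≤ Real.exp (-t) * |u - v| := by
  wlog h : v ≤ u generalizing u v
  · rw [abs_sub_comm, abs_sub_comm u v]
    exact this hv hu (le_of_not_ge h)
  have h1 : Real.exp (-u) ≤ Real.exp (-v) := Real.exp_le_exp.2 (by linarith)
  rw [abs_of_nonpos (by linarith), abs_of_nonneg (by linarith : (0:ℝ) ≤ u - v)]
  have key : -(Real.exp (-u) - Real.exp (-v)) = Real.exp (-v) * (1 - Real.exp (-(u - v))) := by
    rw [mul_sub, mul_one, ← Real.exp_add]; ring_nf
  rw [key]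
  have h2 : 1 - Real.exp (-(u - v)) ≤ u - v := by nlinarith [Real.add_one_le_exp (-(u - v))]
  have h3 : Real.exp (-v) ≤ Real.exp (-t) := Real.exp_le_exp.2 (by linarith)
  calc Real.exp (-v) * (1 - Real.exp (-(u - v))) ≤ Real.exp (-v) * (u - v) :=
        mul_le_mul_of_nonneg_left h2 (le_of_lt (Real.exp_pos _))
    _ ≤ Real.exp (-t) * (u - v) := mul_le_mul_of_nonneg_right h3 (by linarith)

lemma rpow_neg_half_lip {lo a b : ℝ} (hlo : 0 < lo) (ha : lo ≤ a) (hb : lo ≤ b) :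
    |a ^ (-(1:ℝ)/2) - b ^ (-(1:ℝ)/2)| ≤ |a - b| / (2 * lo * Real.sqrt lo) := by
  have ha0 : 0 < a := lt_of_lt_of_le hlo ha
  have hb0 : 0 < b := lt_of_lt_of_le hlo hb
  have erpow : ∀ x : ℝ, 0 < x → x ^ (-(1:ℝ)/2) = (Real.sqrt x)⁻¹ := by
    intro x hx
    rw [show (-(1:ℝ)/2) = -(1/2 : ℝ) by ring, Real.rpow_neg hx.le, ← Real.sqrt_eq_rpow]
  rw [erpow a ha0, erpow b hb0]
  have hsl : 0 < Real.sqrt lo := Real.sqrt_pos.2 hlo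
  have hsa : Real.sqrt lo ≤ Real.sqrt a := Real.sqrt_le_sqrt ha
  have hsb : Real.sqrt lo ≤ Real.sqrt b := Real.sqrt_le_sqrt hb
  have hsa0 : 0 < Real.sqrt a := lt_of_lt_of_le hsl hsa
  have hsb0 : 0 < Real.sqrt b := lt_of_lt_of_le hsl hsb
  have expand : (Real.sqrt b - Real.sqrt a) * (Real.sqrt b + Real.sqrt a) = b - a := by
    have e1 : (Real.sqrt b - Real.sqrt a) * (Real.sqrt b + Real.sqrt a)
        = Real.sqrt b ^ 2 - Real.sqrt a ^ 2 := by ring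
    rw [e1, Real.sq_sqrt hb0.le, Real.sq_sqrt ha0.le]
  have habs : |Real.sqrt b - Real.sqrt a| * (Real.sqrt b + Real.sqrt a) = |b - a| := by
    rw [← abs_of_nonneg (by positivity : (0:ℝ) ≤ Real.sqrt b + Real.sqrt a), ← abs_mul, expand]
  have hnum : |Real.sqrt b - Real.sqrt a| ≤ |a - b| / (2 * Real.sqrt lo) := by
    rw [le_div_iff₀ (by positivity), abs_sub_comm a b]
    calc |Real.sqrt b - Real.sqrt a| * (2 * Real.sqrt lo)
        ≤ |Real.sqrt b - Real.sqrt a| * (Real.sqrt b + Real.sqrt a) := by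
          apply mul_le_mul_of_nonneg_left (by linarith) (abs_nonneg _)
      _ = |b - a| := habs
  have hquot : (Real.sqrt a)⁻¹ - (Real.sqrt b)⁻¹ =
      (Real.sqrt b - Real.sqrt a) / (Real.sqrt a * Real.sqrt b) := by
    field_simp
  rw [hquot, abs_div, abs_of_pos (by positivity : (0:ℝ) < Real.sqrt a * Real.sqrt b)]
  have hden : lo ≤ Real.sqrt a * Real.sqrt b := by
    calc lo = Real.sqrt lo * Real.sqrt lo := (Real.mul_self_sqrt hlo.le).symm
      _ ≤ Real.sqrt a * Real.sqrt b := by apply mul_le_mul hsa hsb hsl.le hsa0.le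
  calc |Real.sqrt b - Real.sqrt a| / (Real.sqrt a * Real.sqrt b)
      ≤ (|a - b| / (2 * Real.sqrt lo)) / lo := by
        apply div_le_div₀ (by positivity) hnum hlo hden
    _ = |a - b| / (2 * lo * Real.sqrt lo) := by
        rw [div_div]; ring_nf


lemma bilin_cs'' {q : ℕ} (S : Matrix (Fin q) (Fin q) ℝ) (hs : S.IsSymm)
    (hpsd : ∀ z : Fin q → ℝ, 0 ≤ z ⬝ᵥ (S *ᵥ z)) (x y : Fin q → ℝ) :
    (x ⬝ᵥ (S *ᵥ y)) ^ 2 ≤ (x ⬝ᵥ (S *ᵥ x)) * (y ⬝ᵥ (S *ᵥ y)) := bilin_cs S hs hpsd x y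

lemma entry_bound {q : ℕ} {m M : ℝ} (hm : 0 < m) (S : Matrix (Fin q) (Fin q) ℝ)
    (hs : S.IsSymm)
    (hb : ∀ x : Fin q → ℝ, m * ∑ i, x i ^ 2 ≤ x ⬝ᵥ (S *ᵥ x) ∧
        x ⬝ᵥ (S *ᵥ x) ≤ M * ∑ i, x i ^ 2) (i j : Fin q) : |S i j| ≤ M := by
  have hMpos : 0 < M := by
    have h1 := (hb (Pi.single i 1)).1
    have h2 := (hb (Pi.single i 1)).2
    have hsum : ∑ k, (Pi.single i 1 : Fin q → ℝ) k ^ 2 = 1 := by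
      simp [Pi.single_apply]
    rw [hsum, mul_one] at h1 h2
    linarith
  have hquad : ∀ k l : Fin q,
      (Pi.single k 1 : Fin q → ℝ) ⬝ᵥ (S *ᵥ (Pi.single l 1 : Fin q → ℝ)) = S k l := by
    intro k l
    simp [dotProduct, Matrix.mulVec, Pi.single_apply, Finset.sum_ite_eq',
      Finset.mul_sum]
  have hsingle : ∀ k : Fin q, ∑ l, (Pi.single k 1 : Fin q → ℝ) l ^ 2 = 1 := by
    intro k; simp [Pi.single_apply]
  have hdiag : ∀ k, S k k ≤ M := by
    intro k
    have := (hb (Pi.single k 1)).2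
    rw [hsingle k, mul_one, hquad k k] at this
    exact this
  have hcs := bilin_cs'' S hs (fun z => le_trans (by positivity) ((hb z).1))
      (Pi.single i 1) (Pi.single j 1)
  rw [hquad i j, hquad i i, hquad j j] at hcs
  have hdi : 0 ≤ S i i := by
    have := (hb (Pi.single i 1)).1
    rw [hsingle i, mul_one, hquad i i] at this
    linarith
  have hdj : 0 ≤ S j j := by
    have := (hb (Pi.single j 1)).1
    rw [hsingle j, mul_one, hquad j j] at this
    linarith
  have : (S i j) ^ 2 ≤ M ^ 2 := by nlinarith [hdiag i, hdiag j]
  rw [← Real.sqrt_sq_eq_abs]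
  calc Real.sqrt (S i j ^ 2) ≤ Real.sqrt (M ^ 2) := Real.sqrt_le_sqrt this
    _ = M := Real.sqrt_sq hMpos.le


lemma cs_dot' {q : ℕ} (x y : Fin q → ℝ) :
    |x ⬝ᵥ y| ≤ Real.sqrt (∑ i, x i ^ 2) * Real.sqrt (∑ i, y i ^ 2) := cs_dot x y

section
variable {q : ℕ} {m M : ℝ} (hm : 0 < m) (S : Matrix (Fin q) (Fin q) ℝ)
  (hs : S.IsSymm) (hpd : S.PosDef)
  (hb : ∀ x : Fin q → ℝ, m * ∑ i, x i ^ 2 ≤ x ⬝ᵥ (S *ᵥ x) ∧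
        x ⬝ᵥ (S *ᵥ x) ≤ M * ∑ i, x i ^ 2)

include hpd in
lemma mul_inv_cancel' : S * S⁻¹ = 1 :=
  Matrix.mul_nonsing_inv S (isUnit_iff_ne_zero.2 (ne_of_gt hpd.det_pos))

include hpd in
lemma mulVec_inv_cancel (x : Fin q → ℝ) : S *ᵥ (S⁻¹ *ᵥ x) = x := by
  rw [Matrix.mulVec_mulVec, mul_inv_cancel' S hpd, Matrix.one_mulVec]

include hm hpd hb in
lemma inv_vec_sq_le (x : Fin q → ℝ) :
    ∑ i, (S⁻¹ *ᵥ x) i ^ 2 ≤ (1 / m) ^ 2 * ∑ i, x i ^ 2 := by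
  set y := S⁻¹ *ᵥ x with hy
  have hSy : S *ᵥ y = x := mulVec_inv_cancel S hpd x
  have h1 : m * ∑ i, y i ^ 2 ≤ y ⬝ᵥ x := by
    have := (hb y).1; rw [hSy] at this; exact this
  set a := Real.sqrt (∑ i, y i ^ 2) with ha
  set b := Real.sqrt (∑ i, x i ^ 2) with hbb
  have ha2 : a ^ 2 = ∑ i, y i ^ 2 := Real.sq_sqrt (by positivity)
  have hb2 : b ^ 2 = ∑ i, x i ^ 2 := Real.sq_sqrt (by positivity)
  have hcs : y ⬝ᵥ x ≤ a * b := le_trans (le_abs_self _) (cs_dot' y x)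
  have ha0 : 0 ≤ a := Real.sqrt_nonneg _
  have hb0 : 0 ≤ b := Real.sqrt_nonneg _
  rw [← ha2, ← hb2]
  rcases eq_or_lt_of_le ha0 with h | h
  · have hz : a ^ 2 = 0 := by rw [← h]; ring
    rw [hz]; positivity
  · have hma : m * a ≤ b := by
      have h' : m * (a * a) ≤ a * b := by nlinarith
      have := (mul_le_mul_iff_right₀ h).mp (by linarith [h'] : a * (m * a) ≤ a * b)
      linarith
    have : a ^ 2 * m ^ 2 ≤ b ^ 2 := by nlinarith
    rw [show (1 / m) ^ 2 * b ^ 2 = b ^ 2 / m ^ 2 by ring, le_div_iff₀ (by positivity)]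
    exact this

lemma bilin_cs' {q : ℕ} (S : Matrix (Fin q) (Fin q) ℝ) (hs : S.IsSymm)
    (hpsd : ∀ z : Fin q → ℝ, 0 ≤ z ⬝ᵥ (S *ᵥ z)) (x y : Fin q → ℝ) :
    (x ⬝ᵥ (S *ᵥ y)) ^ 2 ≤ (x ⬝ᵥ (S *ᵥ x)) * (y ⬝ᵥ (S *ᵥ y)) := bilin_cs S hs hpsd x y

include hm hs hpd hb in
lemma inv_quad_lb (hMpos : 0 < M) (x : Fin q → ℝ) :
    (1 / M) * ∑ i, x i ^ 2 ≤ x ⬝ᵥ (S⁻¹ *ᵥ x) := by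
  set y := S⁻¹ *ᵥ x with hy
  have hSy : S *ᵥ y = x := mulVec_inv_cancel S hpd x
  have hQ0 : 0 ≤ x ⬝ᵥ (S⁻¹ *ᵥ x) := by
    have h1 := (hb y).1
    rw [hSy] at h1
    have : x ⬝ᵥ (S⁻¹ *ᵥ x) = y ⬝ᵥ x := dotProduct_comm _ _
    rw [this]
    have : 0 ≤ m * ∑ i, y i ^ 2 := by positivity
    linarith
  have hxx : x ⬝ᵥ (S *ᵥ y) = ∑ i, x i ^ 2 := by
    rw [hSy]; simp [dotProduct, pow_two]
  have hyy : y ⬝ᵥ (S *ᵥ y) = x ⬝ᵥ (S⁻¹ *ᵥ x) := by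
    rw [hSy, dotProduct_comm]
  have hcs := bilin_cs' S hs (fun z => le_trans (by positivity) ((hb z).1)) x y
  rw [hxx, hyy] at hcs
  have hb2 := (hb x).2
  set t := ∑ i, x i ^ 2 with ht
  have ht0 : 0 ≤ t := by positivity
  have key : t ^ 2 ≤ (M * t) * (x ⬝ᵥ (S⁻¹ *ᵥ x)) := le_trans hcs (by
    apply mul_le_mul_of_nonneg_right hb2 hQ0)
  have hQy : x ⬝ᵥ (S⁻¹ *ᵥ x) = x ⬝ᵥ y := rfl
  rw [hQy] at key hQ0
  show (1 / M) * t ≤ x ⬝ᵥ y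
  rcases eq_or_lt_of_le ht0 with h | h
  · rw [← h, mul_zero]; exact hQ0
  · have h2 : t ≤ M * (x ⬝ᵥ y) :=
      (mul_le_mul_iff_right₀ h).mp (by nlinarith : t * t ≤ t * (M * (x ⬝ᵥ y)))
    rw [div_mul_eq_mul_div, one_mul, div_le_iff₀ hMpos]
    linarith

lemma inv_isSymm {q : ℕ} (S : Matrix (Fin q) (Fin q) ℝ) (hs : S.IsSymm) : (S⁻¹).IsSymm := by
  rw [Matrix.IsSymm, Matrix.transpose_nonsing_inv, hs.eq]

end

lemma dot_mulVec_symm {q : ℕ} (S : Matrix (Fin q) (Fin q) ℝ) (hs : S.IsSymm)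
    (u w : Fin q → ℝ) : u ⬝ᵥ (S *ᵥ w) = (S *ᵥ u) ⬝ᵥ w := by
  rw [Matrix.dotProduct_mulVec, ← Matrix.mulVec_transpose, hs.eq]

lemma inv_diff_eq {q : ℕ} (S₁ S₂ : Matrix (Fin q) (Fin q) ℝ)
    (h₁ : S₁.PosDef) (h₂ : S₂.PosDef) :
    S₁⁻¹ - S₂⁻¹ = S₁⁻¹ * (S₂ - S₁) * S₂⁻¹ := by
  have hu1 : S₁⁻¹ * S₁ = 1 :=
    Matrix.nonsing_inv_mul S₁ (isUnit_iff_ne_zero.2 (ne_of_gt h₁.det_pos))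
  have hu2 : S₂ * S₂⁻¹ = 1 :=
    Matrix.mul_nonsing_inv S₂ (isUnit_iff_ne_zero.2 (ne_of_gt h₂.det_pos))
  calc S₁⁻¹ - S₂⁻¹ = S₁⁻¹ * (S₂ * S₂⁻¹) - (S₁⁻¹ * S₁) * S₂⁻¹ := by rw [hu1, hu2]; simp
    _ = S₁⁻¹ * (S₂ - S₁) * S₂⁻¹ := by noncomm_ring

lemma cont_quad {q : ℕ} (A : Matrix (Fin q) (Fin q) ℝ) :
    Continuous fun x : Fin q → ℝ => x ⬝ᵥ (A *ᵥ x) := by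
  show Continuous fun x : Fin q → ℝ => ∑ i, x i * ∑ j, A i j * x j
  apply continuous_finset_sum
  intro i _
  exact (continuous_apply i).mul
    (continuous_finset_sum _ fun j _ => continuous_const.mul (continuous_apply j))

section Main
variable {q : ℕ} {m M : ℝ}

lemma quad_diff_bound (hm : 0 < m) (hmM : m ≤ M)
    (S₁ S₂ : Matrix (Fin q) (Fin q) ℝ)
    (hs₁ : S₁.IsSymm) (hs₂ : S₂.IsSymm) (hpd₁ : S₁.PosDef) (hpd₂ : S₂.PosDef)
    (hb₁ : ∀ x : Fin q → ℝ, m * ∑ i, x i ^ 2 ≤ x ⬝ᵥ (S₁ *ᵥ x) ∧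
        x ⬝ᵥ (S₁ *ᵥ x) ≤ M * ∑ i, x i ^ 2)
    (hb₂ : ∀ x : Fin q → ℝ, m * ∑ i, x i ^ 2 ≤ x ⬝ᵥ (S₂ *ᵥ x) ∧
        x ⬝ᵥ (S₂ *ᵥ x) ≤ M * ∑ i, x i ^ 2) (x : Fin q → ℝ) :
    |x ⬝ᵥ (S₁⁻¹ *ᵥ x) - x ⬝ᵥ (S₂⁻¹ *ᵥ x)| ≤
      Real.sqrt (∑ i, ∑ j, (S₁ i j - S₂ i j) ^ 2) * ((1 / m) ^ 2 * ∑ i, x i ^ 2) := by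
  set δ := Real.sqrt (∑ i, ∑ j, (S₁ i j - S₂ i j) ^ 2) with hδ
  have hδ' : Real.sqrt (∑ i, ∑ j, (S₂ i j - S₁ i j) ^ 2) = δ := by
    rw [hδ]
    congr 1
    apply Finset.sum_congr rfl
    intro i _
    apply Finset.sum_congr rfl
    intro j _
    ring
  have h1 : x ⬝ᵥ (S₁⁻¹ *ᵥ x) - x ⬝ᵥ (S₂⁻¹ *ᵥ x) =
      (S₁⁻¹ *ᵥ x) ⬝ᵥ ((S₂ - S₁) *ᵥ (S₂⁻¹ *ᵥ x)) := by
    rw [← dotProduct_sub, ← Matrix.sub_mulVec, inv_diff_eq S₁ S₂ hpd₁ hpd₂,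
      ← Matrix.mulVec_mulVec, ← Matrix.mulVec_mulVec,
      dot_mulVec_symm S₁⁻¹ (inv_isSymm S₁ hs₁)]
  rw [h1]
  set u := S₁⁻¹ *ᵥ x
  set v := S₂⁻¹ *ᵥ x
  have hu : Real.sqrt (∑ i, u i ^ 2) ≤ (1 / m) * Real.sqrt (∑ i, x i ^ 2) := by
    have := inv_vec_sq_le hm S₁ hpd₁ hb₁ x
    calc Real.sqrt (∑ i, u i ^ 2) ≤ Real.sqrt ((1 / m) ^ 2 * ∑ i, x i ^ 2) :=
          Real.sqrt_le_sqrt this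
      _ = (1 / m) * Real.sqrt (∑ i, x i ^ 2) := by
          rw [Real.sqrt_mul (by positivity), Real.sqrt_sq (by positivity)]
  have hv : Real.sqrt (∑ i, v i ^ 2) ≤ (1 / m) * Real.sqrt (∑ i, x i ^ 2) := by
    have := inv_vec_sq_le hm S₂ hpd₂ hb₂ x
    calc Real.sqrt (∑ i, v i ^ 2) ≤ Real.sqrt ((1 / m) ^ 2 * ∑ i, x i ^ 2) :=
          Real.sqrt_le_sqrt this
      _ = (1 / m) * Real.sqrt (∑ i, x i ^ 2) := by
          rw [Real.sqrt_mul (by positivity), Real.sqrt_sq (by positivity)]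
  calc |u ⬝ᵥ ((S₂ - S₁) *ᵥ v)| ≤ Real.sqrt (∑ i, ∑ j, (S₂ - S₁) i j ^ 2) *
        (Real.sqrt (∑ i, u i ^ 2) * Real.sqrt (∑ i, v i ^ 2)) := frob_bound _ u v
    _ ≤ δ * (((1 / m) * Real.sqrt (∑ i, x i ^ 2)) * ((1 / m) * Real.sqrt (∑ i, x i ^ 2))) := by
        have he : Real.sqrt (∑ i, ∑ j, (S₂ - S₁) i j ^ 2) = δ := by
          rw [← hδ']
          congr 1
        rw [he]
        apply mul_le_mul_of_nonneg_left _ (Real.sqrt_nonneg _)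
        exact mul_le_mul hu hv (Real.sqrt_nonneg _) (by positivity)
    _ = δ * ((1 / m) ^ 2 * (Real.sqrt (∑ i, x i ^ 2) * Real.sqrt (∑ i, x i ^ 2))) := by ring
    _ = δ * ((1 / m) ^ 2 * ∑ i, x i ^ 2) := by
        rw [Real.mul_self_sqrt (by positivity)]

end Main

/-- Total variation bound for `q`-dimensional centered Gaussian
densities: if `S₁, S₂` are symmetric positive definite with all eigenvalues in
`[m, M] ⊂ (0,∞)` (expressed via two-sided quadratic-form bounds), then
`∫ |φ(x;S₁) − φ(x;S₂)| dx ≤ K(q,m,M) ‖S₁ − S₂‖` (Frobenius norm). -/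
theorem stmt7 (q : ℕ) (m M : ℝ) (hm : 0 < m) (hmM : m ≤ M) :
    ∃ K > (0 : ℝ), ∀ S₁ S₂ : Matrix (Fin q) (Fin q) ℝ,
      S₁.IsSymm → S₂.IsSymm → S₁.PosDef → S₂.PosDef →
      (∀ x : Fin q → ℝ, m * ∑ i, x i ^ 2 ≤ x ⬝ᵥ (S₁ *ᵥ x) ∧
        x ⬝ᵥ (S₁ *ᵥ x) ≤ M * ∑ i, x i ^ 2) →
      (∀ x : Fin q → ℝ, m * ∑ i, x i ^ 2 ≤ x ⬝ᵥ (S₂ *ᵥ x) ∧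
        x ⬝ᵥ (S₂ *ᵥ x) ≤ M * ∑ i, x i ^ 2) →
      (∫ x : Fin q → ℝ,
        |(2 * π) ^ (-(q : ℝ) / 2) * S₁.det ^ (-(1 : ℝ) / 2) *
            Real.exp (-(x ⬝ᵥ (S₁⁻¹ *ᵥ x)) / 2) -
          (2 * π) ^ (-(q : ℝ) / 2) * S₂.det ^ (-(1 : ℝ) / 2) *
            Real.exp (-(x ⬝ᵥ (S₂⁻¹ *ᵥ x)) / 2)|) ≤
        K * Real.sqrt (∑ i, ∑ j, (S₁ i j - S₂ i j) ^ 2) := by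
  have hM : 0 < M := lt_of_lt_of_le hm hmM
  set c : ℝ := 1 / (2 * M) with hc_def
  have hc : 0 < c := by positivity
  set lo : ℝ := m ^ q with hlo_def
  have hlo : 0 < lo := by positivity
  set P : ℝ := (2 * π) ^ (-(q : ℝ) / 2) with hP_def
  have hP : 0 < P := Real.rpow_pos_of_pos (by positivity) _
  set I₀ : ℝ := ∫ x : Fin q → ℝ, Real.exp (-c * ∑ i, x i ^ 2) with hI0_def
  set I₂ : ℝ := ∫ x : Fin q → ℝ, (∑ i, x i ^ 2) * Real.exp (-c * ∑ i, x i ^ 2) with hI2_def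
  have hI0 : 0 ≤ I₀ := integral_nonneg fun x => (Real.exp_pos _).le
  have hI2 : 0 ≤ I₂ := integral_nonneg fun x => by positivity
  set Cd : ℝ := ((q.factorial : ℝ) * q * M ^ (q - 1)) / (2 * lo * Real.sqrt lo) with hCd_def
  have hCd : 0 ≤ Cd := by positivity
  refine ⟨P * Cd * I₀ + P * (Real.sqrt lo)⁻¹ * ((1 / m) ^ 2 / 2) * I₂ + 1, by positivity, ?_⟩
  intro S₁ S₂ hs₁ hs₂ hpd₁ hpd₂ hb₁ hb₂
  set δ : ℝ := Real.sqrt (∑ i, ∑ j, (S₁ i j - S₂ i j) ^ 2) with hδ_def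
  have hδ0 : 0 ≤ δ := Real.sqrt_nonneg _
  -- determinant facts
  have hd₁ := det_bounds hm S₁ hs₁ hb₁
  have hd₂ := det_bounds hm S₂ hs₂ hb₂
  have hd₁0 : 0 < S₁.det := lt_of_lt_of_le hlo hd₁.1
  have hd₂0 : 0 < S₂.det := lt_of_lt_of_le hlo hd₂.1
  set a₁ : ℝ := S₁.det ^ (-(1 : ℝ) / 2) with ha1_def
  set a₂ : ℝ := S₂.det ^ (-(1 : ℝ) / 2) with ha2_def
  have ha₂pos : 0 < a₂ := Real.rpow_pos_of_pos hd₂0 _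
  have ha₂le : a₂ ≤ (Real.sqrt lo)⁻¹ := by
    rw [ha2_def, show (-(1:ℝ)/2) = -(1/2 : ℝ) by ring, Real.rpow_neg hd₂0.le,
      ← Real.sqrt_eq_rpow]
    apply inv_anti₀ (Real.sqrt_pos.2 hlo) (Real.sqrt_le_sqrt hd₂.1)
  -- |a₁ - a₂| bound
  have hdetdiff : |S₁.det - S₂.det| ≤ (q.factorial : ℝ) * q * M ^ (q - 1) * δ :=
    det_lipschitz hM.le S₁ S₂ (entry_bound hm S₁ hs₁ hb₁) (entry_bound hm S₂ hs₂ hb₂)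
  have ha_diff : |a₁ - a₂| ≤ Cd * δ := by
    calc |a₁ - a₂| ≤ |S₁.det - S₂.det| / (2 * lo * Real.sqrt lo) :=
          rpow_neg_half_lip hlo hd₁.1 hd₂.1
      _ ≤ ((q.factorial : ℝ) * q * M ^ (q - 1) * δ) / (2 * lo * Real.sqrt lo) := by
          apply div_le_div_of_nonneg_right hdetdiff (by positivity) |>.trans_eq rfl
      _ = Cd * δ := by rw [hCd_def]; ring
  set C₁ : ℝ := P * |a₁ - a₂| with hC1_def
  set C₂ : ℝ := P * a₂ * (δ * (1 / m) ^ 2 / 2) with hC2_def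
  have hC₁ : 0 ≤ C₁ := by positivity
  have hC₂ : 0 ≤ C₂ := by positivity
  -- pointwise bound
  have hpt : ∀ x : Fin q → ℝ,
      |P * a₁ * Real.exp (-(x ⬝ᵥ (S₁⁻¹ *ᵥ x)) / 2) -
        P * a₂ * Real.exp (-(x ⬝ᵥ (S₂⁻¹ *ᵥ x)) / 2)| ≤
      C₁ * Real.exp (-c * ∑ i, x i ^ 2) +
        C₂ * ((∑ i, x i ^ 2) * Real.exp (-c * ∑ i, x i ^ 2)) := by
    intro x
    set t : ℝ := ∑ i, x i ^ 2 with ht_def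
    have ht0 : 0 ≤ t := by positivity
    set Q₁ : ℝ := x ⬝ᵥ (S₁⁻¹ *ᵥ x) with hQ1_def
    set Q₂ : ℝ := x ⬝ᵥ (S₂⁻¹ *ᵥ x) with hQ2_def
    have hQ₁lb : c * t ≤ Q₁ / 2 := by
      have := inv_quad_lb hm S₁ hs₁ hpd₁ hb₁ hM x
      rw [← hQ1_def, ← ht_def] at this
      rw [hc_def]
      calc 1 / (2 * M) * t = (1 / M * t) / 2 := by ring
        _ ≤ Q₁ / 2 := by linarith
    have hQ₂lb : c * t ≤ Q₂ / 2 := by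
      have := inv_quad_lb hm S₂ hs₂ hpd₂ hb₂ hM x
      rw [← hQ2_def, ← ht_def] at this
      rw [hc_def]
      calc 1 / (2 * M) * t = (1 / M * t) / 2 := by ring
        _ ≤ Q₂ / 2 := by linarith
    have hE₁ : Real.exp (-Q₁ / 2) ≤ Real.exp (-(c * t)) := by
      rw [neg_div]
      exact Real.exp_le_exp.2 (by linarith)
    have hQdiff : |Q₁ - Q₂| ≤ δ * ((1 / m) ^ 2 * t) :=
      quad_diff_bound hm hmM S₁ S₂ hs₁ hs₂ hpd₁ hpd₂ hb₁ hb₂ x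
    have hEdiff : |Real.exp (-Q₁ / 2) - Real.exp (-Q₂ / 2)| ≤
        Real.exp (-(c * t)) * (δ * (1 / m) ^ 2 * t / 2) := by
      rw [neg_div, neg_div]
      calc |Real.exp (-(Q₁ / 2)) - Real.exp (-(Q₂ / 2))| ≤
            Real.exp (-(c * t)) * |Q₁ / 2 - Q₂ / 2| := exp_lip hQ₁lb hQ₂lb
        _ = Real.exp (-(c * t)) * (|Q₁ - Q₂| / 2) := by
            rw [show Q₁ / 2 - Q₂ / 2 = (Q₁ - Q₂) / 2 by ring, abs_div]
            norm_num
        _ ≤ Real.exp (-(c * t)) * (δ * (1 / m) ^ 2 * t / 2) := by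
            apply mul_le_mul_of_nonneg_left _ (Real.exp_pos _).le
            calc |Q₁ - Q₂| / 2 ≤ (δ * ((1 / m) ^ 2 * t)) / 2 := by linarith
              _ = δ * (1 / m) ^ 2 * t / 2 := by ring
    have split : P * a₁ * Real.exp (-Q₁ / 2) - P * a₂ * Real.exp (-Q₂ / 2) =
        P * (a₁ - a₂) * Real.exp (-Q₁ / 2) +
          P * a₂ * (Real.exp (-Q₁ / 2) - Real.exp (-Q₂ / 2)) := by ring
    calc |P * a₁ * Real.exp (-Q₁ / 2) - P * a₂ * Real.exp (-Q₂ / 2)|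
        ≤ |P * (a₁ - a₂) * Real.exp (-Q₁ / 2)| +
          |P * a₂ * (Real.exp (-Q₁ / 2) - Real.exp (-Q₂ / 2))| := by
          rw [split]; exact abs_add_le _ _
      _ = P * |a₁ - a₂| * Real.exp (-Q₁ / 2) +
          P * a₂ * |Real.exp (-Q₁ / 2) - Real.exp (-Q₂ / 2)| := by
          rw [abs_mul, abs_mul, abs_mul, abs_mul, abs_of_pos hP, abs_of_pos ha₂pos,
            abs_of_pos (Real.exp_pos _)]
      _ ≤ P * |a₁ - a₂| * Real.exp (-(c * t)) +
          P * a₂ * (Real.exp (-(c * t)) * (δ * (1 / m) ^ 2 * t / 2)) := by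
          gcongr
      _ = C₁ * Real.exp (-(c * t)) + C₂ * (t * Real.exp (-(c * t))) := by
          rw [hC1_def, hC2_def]; ring
      _ = C₁ * Real.exp (-c * t) + C₂ * (t * Real.exp (-c * t)) := by
          rw [neg_mul]
  -- integrability
  have hg_int : Integrable (fun x : Fin q → ℝ =>
      C₁ * Real.exp (-c * ∑ i, x i ^ 2) +
        C₂ * ((∑ i, x i ^ 2) * Real.exp (-c * ∑ i, x i ^ 2))) :=
    ((integrable_gauss_pi hc).const_mul C₁).add ((integrable_sq_gauss_pi hc).const_mul C₂)
  have hFcont : Continuous (fun x : Fin q → ℝ =>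
      |P * a₁ * Real.exp (-(x ⬝ᵥ (S₁⁻¹ *ᵥ x)) / 2) -
        P * a₂ * Real.exp (-(x ⬝ᵥ (S₂⁻¹ *ᵥ x)) / 2)|) := by
    apply Continuous.abs
    apply Continuous.sub
    · exact continuous_const.mul (Real.continuous_exp.comp ((cont_quad S₁⁻¹).neg.div_const 2))
    · exact continuous_const.mul (Real.continuous_exp.comp ((cont_quad S₂⁻¹).neg.div_const 2))
  have hF_int : Integrable (fun x : Fin q → ℝ =>
      |P * a₁ * Real.exp (-(x ⬝ᵥ (S₁⁻¹ *ᵥ x)) / 2) -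
        P * a₂ * Real.exp (-(x ⬝ᵥ (S₂⁻¹ *ᵥ x)) / 2)|) := by
    apply hg_int.mono' hFcont.aestronglyMeasurable
    apply ae_of_all
    intro x
    rw [Real.norm_eq_abs, abs_abs]
    exact hpt x
  -- final chain
  calc (∫ x : Fin q → ℝ,
        |P * a₁ * Real.exp (-(x ⬝ᵥ (S₁⁻¹ *ᵥ x)) / 2) -
          P * a₂ * Real.exp (-(x ⬝ᵥ (S₂⁻¹ *ᵥ x)) / 2)|)
      ≤ ∫ x : Fin q → ℝ, (C₁ * Real.exp (-c * ∑ i, x i ^ 2) +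
          C₂ * ((∑ i, x i ^ 2) * Real.exp (-c * ∑ i, x i ^ 2))) :=
        integral_mono hF_int hg_int hpt
    _ = C₁ * I₀ + C₂ * I₂ := by
        rw [integral_add ((integrable_gauss_pi hc).const_mul C₁)
          ((integrable_sq_gauss_pi hc).const_mul C₂), integral_const_mul, integral_const_mul]
    _ ≤ (P * (Cd * δ)) * I₀ + (P * (Real.sqrt lo)⁻¹ * (δ * (1 / m) ^ 2 / 2)) * I₂ := by
        gcongr
        · rw [hC1_def]
          exact mul_le_mul_of_nonneg_left ha_diff hP.le
        · rw [hC2_def]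
          apply mul_le_mul_of_nonneg_right _ (by positivity)
          exact mul_le_mul_of_nonneg_left ha₂le hP.le
    _ = (P * Cd * I₀ + P * (Real.sqrt lo)⁻¹ * ((1 / m) ^ 2 / 2) * I₂) * δ := by ring
    _ ≤ (P * Cd * I₀ + P * (Real.sqrt lo)⁻¹ * ((1 / m) ^ 2 / 2) * I₂ + 1) * δ := by
        apply mul_le_mul_of_nonneg_right _ hδ0
        linarith
end

section
/- Let W = n^{−1/2} ∑_{i=1}^n x_i ε_i with ε_1,…,ε_n i.i.d. mean-zero random variables with E|ε₁|^r < ∞ for some integer r ≥ 3, and suppose max_j n^{−1}∑_{i=1}^n |x_{i,j}|^r ≤ M. Then there is K ∈ (0,∞) such that P(‖W‖_∞ > K√(log n)) = O(p · n^{−(r−2)/2}). -/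
set_option maxHeartbeats 1000000

open MeasureTheory ProbabilityTheory Filter Asymptotics Finset

section Aux

open Real


lemma exp_neg_quad {u : ℝ} (hu : 0 ≤ u) : Real.exp (-u) ≤ 1 - u + u^2/2 := by
  have hmono : MonotoneOn (fun u : ℝ => 1 - u + u^2/2 - Real.exp (-u)) (Set.Ici 0) := by
    refine monotoneOn_of_deriv_nonneg (convex_Ici 0) (by fun_prop) (fun v hv => ?_) ?_
    · exact (((differentiable_const 1).sub differentiable_id).add
        ((differentiable_id.pow 2).div_const 2)).sub
        (Real.differentiable_exp.comp differentiable_neg) |>.differentiableAt |>.differentiableWithinAt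
    · intro v hv
      have hd : HasDerivAt (fun u : ℝ => 1 - u + u^2/2 - Real.exp (-u))
          (-1 + v - (-Real.exp (-v))) v := by
        have h1 : HasDerivAt (fun u : ℝ => Real.exp (-u)) (-Real.exp (-v)) v := by
          simpa [Function.comp_def] using (Real.hasDerivAt_exp (-v)).comp v (hasDerivAt_neg v)
        have h2 : HasDerivAt (fun u : ℝ => 1 - u + u^2/2) (-1 + v) v := by
          have : HasDerivAt (fun u : ℝ => u^2/2) ((2 * v^1)/2) v :=
            (hasDerivAt_pow 2 v).div_const 2
        
          simpa [Pi.add_def, Pi.sub_def] using ((hasDerivAt_const v (1:ℝ)).sub (hasDerivAt_id v)).add this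
        exact h2.sub h1
      rw [hd.deriv]
      have := Real.add_one_le_exp (-v)
      simp only [Set.mem_Ioi, interior_Ici] at hv
      nlinarith [Real.exp_pos (-v)]
  have h0 := hmono (Set.self_mem_Ici) hu hu
  simp at h0
  linarith

lemma exp_cubic {v : ℝ} (hv : 0 ≤ v) : Real.exp v ≤ 1 + v + v^2/2 + v^3 * Real.exp v := by
  have hmono : MonotoneOn (fun v : ℝ => 1 + v + v^2/2 + v^3 * Real.exp v - Real.exp v)
      (Set.Ici 0) := by
    refine monotoneOn_of_deriv_nonneg (convex_Ici 0) (by fun_prop) (fun w hw => ?_) ?_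
    · exact (Differentiable.differentiableAt (by fun_prop)).differentiableWithinAt
    · intro w hw
      simp only [interior_Ici, Set.mem_Ioi] at hw
      have hd : HasDerivAt (fun v : ℝ => 1 + v + v^2/2 + v^3 * Real.exp v - Real.exp v)
          (1 + w + (3 * w^2 * Real.exp w + w^3 * Real.exp w) - Real.exp w) w := by
        have h1 : HasDerivAt (fun v : ℝ => 1 + v + v^2/2) (1 + w) w := by
          have : HasDerivAt (fun u : ℝ => u^2/2) ((2 * w^1)/2) w :=
            (hasDerivAt_pow 2 w).div_const 2
          simpa [Pi.add_def] using ((hasDerivAt_const w (1:ℝ)).add (hasDerivAt_id w)).add this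
        have h2 : HasDerivAt (fun v : ℝ => v^3 * Real.exp v)
            (3 * w^2 * Real.exp w + w^3 * Real.exp w) w := by
          have := (hasDerivAt_pow 3 w).mul (Real.hasDerivAt_exp w)
          simpa [Pi.mul_def, mul_comm, mul_assoc, mul_left_comm] using this
        simpa [Pi.add_def, Pi.sub_def] using (h1.add h2).sub (Real.hasDerivAt_exp w)
      rw [hd.deriv]
      set E := Real.exp w with hE
      have hEpos : 0 < E := Real.exp_pos w
      have key : E * (1 - w) ≤ 1 := by
        have h := Real.add_one_le_exp (-w)
        have : 1 - w ≤ E⁻¹ := by rw [← Real.exp_neg]; linarith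
        calc E * (1 - w) ≤ E * E⁻¹ := by nlinarith
        _ = 1 := by field_simp
      rcases le_or_gt 1 (3 * w^2 + w^3) with h | h
      · nlinarith [Real.one_le_exp hv]
      · have hw1 : w < 1 := by nlinarith
        nlinarith [mul_le_mul_of_nonneg_right key (show (0:ℝ) ≤ 1 - 3*w^2 - w^3 by linarith),
          mul_pos hEpos (show (0:ℝ) < 1 - w by linarith)]
  have h0 := hmono (Set.self_mem_Ici) hv hv
  simp at h0
  linarith

lemma exp_le_taylor {v w : ℝ} (hvw : v ≤ w) (hw : 0 ≤ w) :
    Real.exp v ≤ 1 + v + v^2/2 + |v|^3 * Real.exp w := by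
  rcases le_or_gt v 0 with h | h
  · have := exp_neg_quad (u := -v) (by linarith)
    have h3 : 0 ≤ |v|^3 * Real.exp w := by positivity
    simp only [neg_neg] at this
    nlinarith
  · have h1 := exp_cubic h.le
    have h2 : v^3 * Real.exp v ≤ |v|^3 * Real.exp w := by
      rw [abs_of_pos h]
      exact mul_le_mul_of_nonneg_left (Real.exp_le_exp.mpr hvw) (by positivity)
    linarith

-- pointwise facts about min
lemma min_sq_le {u y : ℝ} (hy : 0 < y) : (min u y)^2 ≤ u^2 := by
  rcases le_or_gt u y with h | h
  · rw [min_eq_left h]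
  · rw [min_eq_right h.le]
    nlinarith

lemma abs_min_le {u y : ℝ} (hy : 0 < y) : |min u y| ≤ |u| := by
  rcases le_or_gt u y with h | h
  · rw [min_eq_left h]
  · rw [min_eq_right h.le, abs_of_pos hy, abs_of_pos (hy.trans h)]
    exact h.le

/-- Single-variable truncated mgf bound. -/
lemma mgf_min_le {Ω : Type*} [MeasurableSpace Ω] (P : Measure Ω) [IsProbabilityMeasure P]
    (X : Ω → ℝ) (hX : Measurable X)
    (hint1 : Integrable X P) (hmean : ∫ ω, X ω ∂P = 0)
    (hint2 : Integrable (fun ω => (X ω)^2) P)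
    (hint3 : Integrable (fun ω => |X ω|^3) P)
    (lam y : ℝ) (hlam : 0 < lam) (hy : 0 < y) :
    mgf (fun ω => min (X ω) y) P lam ≤
      Real.exp (lam^2 * (∫ ω, (X ω)^2 ∂P)/2
        + Real.exp (lam*y) * lam^3 * ∫ ω, |X ω|^3 ∂P) := by
  have hminm : Measurable fun ω => min (X ω) y := hX.min measurable_const
  have hintmin : Integrable (fun ω => min (X ω) y) P := by
    refine (hint1.abs.add (integrable_const |y|)).mono' hminm.aestronglyMeasurable ?_
    filter_upwards with ω
    rw [Real.norm_eq_abs]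
    simp only [Pi.add_apply]
    rcases le_or_gt (X ω) y with h | h
    · rw [min_eq_left h]
      have : (0:ℝ) ≤ |y| := abs_nonneg _
      linarith [le_abs_self (X ω), neg_abs_le (X ω), abs_nonneg (X ω)]
    · rw [min_eq_right h.le]
      linarith [le_abs_self y, abs_nonneg (X ω)]
  have hintmin2 : Integrable (fun ω => (min (X ω) y)^2) P := by
    refine hint2.mono' (hminm.pow_const 2).aestronglyMeasurable ?_
    filter_upwards with ω
    rw [Real.norm_eq_abs, abs_of_nonneg (sq_nonneg _)]
    exact min_sq_le hy
  have hintmin3 : Integrable (fun ω => |min (X ω) y|^3) P := by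
    refine hint3.mono' (hminm.abs.pow_const 3).aestronglyMeasurable ?_
    filter_upwards with ω
    rw [Real.norm_eq_abs, abs_of_nonneg (by positivity)]
    exact pow_le_pow_left₀ (abs_nonneg _) (abs_min_le hy) 3
  -- step 1: integrand bound
  have hstep1 : mgf (fun ω => min (X ω) y) P lam ≤
      ∫ ω, (1 + lam * min (X ω) y + (lam * min (X ω) y)^2/2
        + |lam * min (X ω) y|^3 * Real.exp (lam*y)) ∂P := by
    rw [mgf]
    refine integral_mono ?_ ?_ ?_
    · -- integrable exp(lam * min)
      refine (integrable_const (Real.exp (lam*y))).mono' (Real.measurable_exp.comp (hminm.const_mul lam)).aestronglyMeasurable ?_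
      filter_upwards with ω
      rw [Real.norm_eq_abs, abs_of_pos (Real.exp_pos _)]
      exact Real.exp_le_exp.mpr (mul_le_mul_of_nonneg_left (min_le_right _ _) hlam.le)
    · refine ((((integrable_const 1).add (hintmin.const_mul lam)).add ?_).add ?_)
      · exact ((hintmin2.const_mul (lam^2)).div_const 2).congr (by
          filter_upwards with ω; ring)
      · refine ((hintmin3.const_mul (|lam|^3 * Real.exp (lam*y)))).congr ?_
        filter_upwards with ω
        rw [abs_mul, mul_pow]
        ring
    · intro ω
      exact exp_le_taylor (mul_le_mul_of_nonneg_left (min_le_right _ _) hlam.le)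
        (by positivity)
  -- step 2: compute the integral and bound
  have hEmin : ∫ ω, min (X ω) y ∂P ≤ 0 := by
    rw [← hmean]
    exact integral_mono hintmin hint1 fun ω => min_le_left _ _
  have hE2 : ∫ ω, (min (X ω) y)^2 ∂P ≤ ∫ ω, (X ω)^2 ∂P :=
    integral_mono hintmin2 hint2 fun ω => min_sq_le hy
  have hE3 : ∫ ω, |min (X ω) y|^3 ∂P ≤ ∫ ω, |X ω|^3 ∂P :=
    integral_mono hintmin3 hint3 fun ω =>
      pow_le_pow_left₀ (abs_nonneg _) (abs_min_le hy) 3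
  have hnn2 : 0 ≤ ∫ ω, (X ω)^2 ∂P := integral_nonneg fun ω => sq_nonneg _
  have hnn3 : 0 ≤ ∫ ω, |X ω|^3 ∂P := integral_nonneg fun ω => by positivity
  have hsplit : ∫ ω, (1 + lam * min (X ω) y + (lam * min (X ω) y)^2/2
        + |lam * min (X ω) y|^3 * Real.exp (lam*y)) ∂P
      = 1 + lam * (∫ ω, min (X ω) y ∂P) + lam^2 * (∫ ω, (min (X ω) y)^2 ∂P)/2
        + Real.exp (lam*y) * lam^3 * ∫ ω, |min (X ω) y|^3 ∂P := by
    have e2 : Integrable (fun ω => (lam * min (X ω) y)^2/2) P := by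
      exact ((hintmin2.const_mul (lam^2)).div_const 2).congr (by
        filter_upwards with ω; ring)
    have e3 : Integrable (fun ω => |lam * min (X ω) y|^3 * Real.exp (lam*y)) P := by
      refine ((hintmin3.const_mul (|lam|^3 * Real.exp (lam*y)))).congr ?_
      filter_upwards with ω
      rw [abs_mul, mul_pow]; ring
    have i1 : Integrable (fun ω => (1:ℝ) + lam * min (X ω) y) P :=
      (integrable_const 1).add (hintmin.const_mul lam)
    have i2 : Integrable (fun ω => (1:ℝ) + lam * min (X ω) y
        + (lam * min (X ω) y)^2/2) P := i1.add e2
    rw [integral_add i2 e3, integral_add i1 e2,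
      integral_add (integrable_const 1) (hintmin.const_mul lam)]
    simp only [integral_const, measureReal_def, measure_univ, ENNReal.toReal_one, smul_eq_mul, one_mul,
      integral_const_mul]
    congr 1
    · congr 1
      have : ∀ ω, (lam * min (X ω) y)^2/2 = (lam^2/2) * (min (X ω) y)^2 := fun ω => by ring
      rw [integral_congr_ae (Filter.Eventually.of_forall this), integral_const_mul]
      ring
    · have : ∀ ω, |lam * min (X ω) y|^3 * Real.exp (lam*y)
          = (|lam|^3 * Real.exp (lam*y)) * |min (X ω) y|^3 := fun ω => by
        rw [abs_mul, mul_pow]; ring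
      rw [integral_congr_ae (Filter.Eventually.of_forall this), integral_const_mul,
        abs_of_pos hlam]
      ring
  have hfinal : mgf (fun ω => min (X ω) y) P lam ≤
      1 + (lam^2 * (∫ ω, (X ω)^2 ∂P)/2
        + Real.exp (lam*y) * lam^3 * ∫ ω, |X ω|^3 ∂P) := by
    rw [hsplit] at hstep1
    have b1 : lam * (∫ ω, min (X ω) y ∂P) ≤ 0 :=
      mul_nonpos_of_nonneg_of_nonpos hlam.le hEmin
    have b2 : lam^2 * (∫ ω, (min (X ω) y)^2 ∂P)/2 ≤ lam^2 * (∫ ω, (X ω)^2 ∂P)/2 := by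
      have := mul_le_mul_of_nonneg_left hE2 (sq_nonneg lam)
      linarith
    have b3 : Real.exp (lam*y) * lam^3 * (∫ ω, |min (X ω) y|^3 ∂P)
        ≤ Real.exp (lam*y) * lam^3 * ∫ ω, |X ω|^3 ∂P :=
      mul_le_mul_of_nonneg_left hE3 (by positivity)
    linarith
  refine hfinal.trans ?_
  have := Real.add_one_le_exp (lam^2 * (∫ ω, (X ω)^2 ∂P)/2
        + Real.exp (lam*y) * lam^3 * ∫ ω, |X ω|^3 ∂P)
  linarith

/-- One-sided tail bound for a weighted sum of independent centered variables. -/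
lemma tail_bound {Ω : Type*} [MeasurableSpace Ω] (P : Measure Ω) [IsProbabilityMeasure P]
    (ε : ℕ → Ω → ℝ) (hmeas : ∀ i, Measurable (ε i))
    (hindep : iIndepFun ε P)
    (hint1 : ∀ i, Integrable (ε i) P) (hmean : ∀ i, ∫ ω, ε i ω ∂P = 0)
    (hint2 : ∀ i, Integrable (fun ω => (ε i ω)^2) P)
    (hint3 : ∀ i, Integrable (fun ω => |ε i ω|^3) P)
    (r : ℕ) (hintr : ∀ i, Integrable (fun ω => |ε i ω|^r) P)
    (n : ℕ) (b : ℕ → ℝ) (t lam y : ℝ) (hlam : 0 < lam) (hy : 0 < y) :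
    (P {ω | t < ∑ i ∈ range n, b i * ε i ω}).toReal ≤
      (∑ i ∈ range n, |b i|^r * ∫ ω, |ε i ω|^r ∂P)/y^r
      + Real.exp (-lam*t)
        * Real.exp (lam^2 * (∑ i ∈ range n, (b i)^2 * ∫ ω, (ε i ω)^2 ∂P)/2
          + Real.exp (lam*y) * lam^3 * ∑ i ∈ range n, |b i|^3 * ∫ ω, |ε i ω|^3 ∂P) := by
  classical
  set X : ℕ → Ω → ℝ := fun i ω => b i * ε i ω with hXdef
  set Y : ℕ → Ω → ℝ := fun i ω => min (X i ω) y with hYdef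
  have hXmeas : ∀ i, Measurable (X i) := fun i => (hmeas i).const_mul (b i)
  have hYmeas : ∀ i, Measurable (Y i) := fun i => (hXmeas i).min measurable_const
  -- moments of X i
  have hXint1 : ∀ i, Integrable (X i) P := fun i => (hint1 i).const_mul (b i)
  have hXmean : ∀ i, ∫ ω, X i ω ∂P = 0 := fun i => by
    simp only [hXdef, integral_const_mul, hmean i, mul_zero]
  have hXint2 : ∀ i, Integrable (fun ω => (X i ω)^2) P := fun i => by
    refine ((hint2 i).const_mul ((b i)^2)).congr ?_
    filter_upwards with ω; simp [hXdef, mul_pow]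
  have hXint3 : ∀ i, Integrable (fun ω => |X i ω|^3) P := fun i => by
    refine ((hint3 i).const_mul (|b i|^3)).congr ?_
    filter_upwards with ω; simp [hXdef, abs_mul, mul_pow]
  have hXintr : ∀ i, Integrable (fun ω => |X i ω|^r) P := fun i => by
    refine ((hintr i).const_mul (|b i|^r)).congr ?_
    filter_upwards with ω; simp [hXdef, abs_mul, mul_pow]
  have hX2int : ∀ i, ∫ ω, (X i ω)^2 ∂P = (b i)^2 * ∫ ω, (ε i ω)^2 ∂P := fun i => by
    rw [← integral_const_mul]
    congr 1; funext ω; simp [hXdef, mul_pow]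
  have hX3int : ∀ i, ∫ ω, |X i ω|^3 ∂P = |b i|^3 * ∫ ω, |ε i ω|^3 ∂P := fun i => by
    rw [← integral_const_mul]
    congr 1; funext ω; simp [hXdef, abs_mul, mul_pow]
  have hXrint : ∀ i, ∫ ω, |X i ω|^r ∂P = |b i|^r * ∫ ω, |ε i ω|^r ∂P := fun i => by
    rw [← integral_const_mul]
    congr 1; funext ω; simp [hXdef, abs_mul, mul_pow]
  set S : Ω → ℝ := ∑ i ∈ range n, Y i with hSdef
  -- event inclusion
  have hsub : {ω | t < ∑ i ∈ range n, b i * ε i ω} ⊆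
      (⋃ i ∈ range n, {ω | y < X i ω}) ∪ {ω | t ≤ S ω} := by
    intro ω hω
    by_cases h : ∃ i ∈ range n, y < X i ω
    · left
      obtain ⟨i, hi, hyi⟩ := h
      exact Set.mem_biUnion hi hyi
    · right
      push_neg at h
      have : S ω = ∑ i ∈ range n, X i ω := by
        rw [hSdef, Finset.sum_apply]
        exact Finset.sum_congr rfl fun i hi => min_eq_left (h i hi)
      simp only [Set.mem_setOf_eq]
      rw [this]
      exact le_of_lt hω
  -- measure bound in ℝ≥0∞ then toReal
  have hm : (P {ω | t < ∑ i ∈ range n, b i * ε i ω}).toReal ≤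
      (∑ i ∈ range n, (P {ω | y < X i ω}).toReal) + (P {ω | t ≤ S ω}).toReal := by
    have h1 : P {ω | t < ∑ i ∈ range n, b i * ε i ω} ≤
        (∑ i ∈ range n, P {ω | y < X i ω}) + P {ω | t ≤ S ω} :=
      (measure_mono hsub).trans ((measure_union_le _ _).trans
        (add_le_add_left (measure_biUnion_finset_le _ _) _))
    have hne1 : (∑ i ∈ range n, P {ω | y < X i ω}) ≠ ⊤ :=
      (ENNReal.sum_lt_top.mpr fun i _ => measure_lt_top P _).ne
    calc (P {ω | t < ∑ i ∈ range n, b i * ε i ω}).toReal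
        ≤ ((∑ i ∈ range n, P {ω | y < X i ω}) + P {ω | t ≤ S ω}).toReal :=
          ENNReal.toReal_mono (ENNReal.add_ne_top.mpr ⟨hne1, measure_ne_top _ _⟩) h1
      _ = (∑ i ∈ range n, P {ω | y < X i ω}).toReal + (P {ω | t ≤ S ω}).toReal := by
          rw [ENNReal.toReal_add hne1 (measure_ne_top _ _)]
      _ = (∑ i ∈ range n, (P {ω | y < X i ω}).toReal) + (P {ω | t ≤ S ω}).toReal := by
          rw [ENNReal.toReal_sum fun i _ => measure_ne_top _ _]
  -- Markov for each truncation event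
  have hmarkov : ∀ i, (P {ω | y < X i ω}).toReal ≤ (|b i|^r * ∫ ω, |ε i ω|^r ∂P)/y^r := by
    intro i
    have hsub2 : {ω | y < X i ω} ⊆ {ω | y^r ≤ |X i ω|^r} := by
      intro ω hω
      simp only [Set.mem_setOf_eq] at hω ⊢
      exact pow_le_pow_left₀ hy.le ((le_abs_self _).trans' hω.le) r
    have hmk := mul_meas_ge_le_integral_of_nonneg
      (ae_of_all P fun ω => by positivity : 0 ≤ᵐ[P] fun ω => |X i ω|^r)
      (hXintr i) (y^r)
    rw [measureReal_def] at hmk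
    have hmono : (P {ω | y < X i ω}).toReal ≤ (P {ω | y^r ≤ |X i ω|^r}).toReal :=
      ENNReal.toReal_mono (measure_ne_top _ _) (measure_mono hsub2)
    have hyr : (0:ℝ) < y^r := by positivity
    rw [← hXrint i, le_div_iff₀ hyr]
    nlinarith [mul_le_mul_of_nonneg_left hmono hyr.le]
  -- Chernoff for the truncated sum
  have hSbound : ∀ ω, S ω ≤ n * y := by
    intro ω
    rw [hSdef, Finset.sum_apply]
    calc ∑ i ∈ range n, Y i ω ≤ ∑ i ∈ range n, y :=
          Finset.sum_le_sum fun i _ => min_le_right _ _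
      _ = n * y := by simp [mul_comm]
  have hSapp : S = fun ω => ∑ i ∈ range n, Y i ω := by
    funext ω; rw [hSdef, Finset.sum_apply]
  have hSmeas : Measurable S := by
    rw [hSapp]; exact Finset.measurable_sum _ fun i _ => hYmeas i
  have hintexp : Integrable (fun ω => Real.exp (lam * S ω)) P := by
    refine (integrable_const (Real.exp (lam * (n * y)))).mono'
      (Real.measurable_exp.comp (hSmeas.const_mul lam)).aestronglyMeasurable ?_
    filter_upwards with ω
    rw [Real.norm_eq_abs, abs_of_pos (Real.exp_pos _)]
    exact Real.exp_le_exp.mpr (mul_le_mul_of_nonneg_left (hSbound ω) hlam.le)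
  have hchern := measure_ge_le_exp_mul_mgf (X := S) (μ := P) t hlam.le hintexp
  -- independence of the Y i
  have hYindep : iIndepFun Y P := by
    refine hindep.comp (g := fun i z => min (b i * z) y) ?_
    exact fun i => (measurable_const_mul (b i)).min measurable_const
  have hmgfsum : mgf S P lam = ∏ i ∈ range n, mgf (Y i) P lam :=
    hYindep.mgf_sum hYmeas (range n)
  have hmgfle : mgf S P lam ≤
      Real.exp (lam^2 * (∑ i ∈ range n, (b i)^2 * ∫ ω, (ε i ω)^2 ∂P)/2
        + Real.exp (lam*y) * lam^3 * ∑ i ∈ range n, |b i|^3 * ∫ ω, |ε i ω|^3 ∂P) := by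
    rw [hmgfsum]
    calc ∏ i ∈ range n, mgf (Y i) P lam
        ≤ ∏ i ∈ range n, Real.exp (lam^2 * (∫ ω, (X i ω)^2 ∂P)/2
            + Real.exp (lam*y) * lam^3 * ∫ ω, |X i ω|^3 ∂P) := by
          refine Finset.prod_le_prod (fun i _ => mgf_nonneg) (fun i _ => ?_)
          exact mgf_min_le P (X i) (hXmeas i) (hXint1 i) (hXmean i) (hXint2 i)
            (hXint3 i) lam y hlam hy
      _ = Real.exp (∑ i ∈ range n, (lam^2 * (∫ ω, (X i ω)^2 ∂P)/2
            + Real.exp (lam*y) * lam^3 * ∫ ω, |X i ω|^3 ∂P)) := by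
          rw [← Real.exp_sum]
      _ = _ := by
          congr 1
          rw [Finset.sum_add_distrib]
          congr 1
          · rw [← Finset.sum_div, ← Finset.mul_sum]
            congr 2
            exact Finset.sum_congr rfl fun i _ => hX2int i
          · rw [← Finset.mul_sum]
            congr 1
            exact Finset.sum_congr rfl fun i _ => hX3int i
  refine hm.trans ?_
  gcongr
  · calc ∑ i ∈ range n, (P {ω | y < X i ω}).toReal
        ≤ ∑ i ∈ range n, (|b i|^r * ∫ ω, |ε i ω|^r ∂P)/y^r :=
          Finset.sum_le_sum fun i _ => hmarkov i
      _ = (∑ i ∈ range n, |b i|^r * ∫ ω, |ε i ω|^r ∂P)/y^r := by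
          rw [Finset.sum_div]
  · calc (P {ω | t ≤ S ω}).toReal ≤ Real.exp (-lam*t) * mgf S P lam := hchern
      _ ≤ _ := mul_le_mul_of_nonneg_left hmgfle (Real.exp_pos _).le

end Aux

/-- For `W_n = n^{-1/2} ∑ᵢ xᵢ εᵢ` with i.i.d. mean-zero errors
having `E|ε₁|^r < ∞` (`r ≥ 3`), and designs with
`max_j n⁻¹ ∑ᵢ |x_{i,j}|^r ≤ M`, there is `K > 0` with
`P(‖W_n‖_∞ > K √(log n)) = O(p_n ⋅ n^{-(r-2)/2})`. -/
theorem stmt8 {Ω : Type*} [MeasurableSpace Ω] (P : Measure Ω)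
    [IsProbabilityMeasure P]
    (ε : ℕ → Ω → ℝ) (hmeas : ∀ i, Measurable (ε i))
    (hindep : iIndepFun ε P)
    (hident : ∀ i, IdentDistrib (ε i) (ε 0) P P)
    (hmean : ∫ ω, ε 0 ω ∂P = 0)
    (r : ℕ) (hr : 3 ≤ r)
    (hmom : Integrable (fun ω => |ε 0 ω| ^ r) P)
    (p : ℕ → ℕ) (x : ∀ n : ℕ, Fin n → Fin (p n) → ℝ) (M : ℝ)
    (hx : ∀ n : ℕ, 0 < n → ∀ j : Fin (p n),
      (n : ℝ)⁻¹ * ∑ i : Fin n, |x n i j| ^ r ≤ M) :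
    ∃ K > (0 : ℝ),
      (fun n : ℕ =>
          (P {ω | ∃ j : Fin (p n),
            K * Real.sqrt (Real.log n) <
              |(n : ℝ) ^ (-(1 : ℝ) / 2) *
                ∑ i : Fin n, x n i j * ε i ω|}).toReal)
        =O[atTop] fun n : ℕ => (p n : ℝ) * (n : ℝ) ^ (-((r : ℝ) - 2) / 2) := by
  classical
  have hrR : (3:ℝ) ≤ (r:ℝ) := by exact_mod_cast hr
  have hrpos : (0:ℝ) < (r:ℝ) := by linarith
  -- pointwise moment comparison
  have habs_bound : ∀ (k : ℕ), k ≤ r → ∀ u : ℝ, |u|^k ≤ 1 + |u|^r := by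
    intro k hk u
    rcases le_or_gt |u| 1 with h | h
    · have h1 : |u|^k ≤ 1 := pow_le_one₀ (abs_nonneg u) h
      have h2 : (0:ℝ) ≤ |u|^r := by positivity
      linarith
    · have := pow_le_pow_right₀ h.le hk
      linarith
  -- integrability of powers of ε 0
  have hint0 : ∀ (k : ℕ), k ≤ r → Integrable (fun ω => |ε 0 ω|^k) P := by
    intro k hk
    refine ((integrable_const (1:ℝ)).add hmom).mono'
      ((hmeas 0).abs.pow_const k).aestronglyMeasurable ?_
    filter_upwards with ω
    rw [Real.norm_eq_abs, abs_of_nonneg (by positivity)]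
    exact habs_bound k hk (ε 0 ω)
  -- moments of ε 0
  set Er := ∫ ω, |ε 0 ω|^r ∂P with hErdef
  set σ2 := ∫ ω, (ε 0 ω)^2 ∂P with hs2def
  set m3 := ∫ ω, |ε 0 ω|^3 ∂P with hm3def
  have hEr0 : 0 ≤ Er := integral_nonneg fun ω => by positivity
  have hs20 : 0 ≤ σ2 := integral_nonneg fun ω => sq_nonneg _
  have hm30 : 0 ≤ m3 := integral_nonneg fun ω => by positivity
  -- per-i transfers
  have hid_abs : ∀ i (k : ℕ), IdentDistrib (fun ω => |ε i ω|^k) (fun ω => |ε 0 ω|^k) P P :=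
    fun i k => (hident i).comp (measurable_id.abs.pow_const k)
  have hid_sq : ∀ i, IdentDistrib (fun ω => (ε i ω)^2) (fun ω => (ε 0 ω)^2) P P :=
    fun i => (hident i).comp (measurable_id.pow_const 2)
  have hint1 : ∀ i, Integrable (ε i) P := by
    intro i
    refine (hident i).integrable_iff.mpr ?_
    refine ((integrable_const (1:ℝ)).add hmom).mono' (hmeas 0).aestronglyMeasurable ?_
    filter_upwards with ω
    rw [Real.norm_eq_abs]
    have := habs_bound 1 (by omega) (ε 0 ω)
    simpa using this
  have hmean_i : ∀ i, ∫ ω, ε i ω ∂P = 0 := fun i => (hident i).integral_eq.trans hmean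
  have hint2_i : ∀ i, Integrable (fun ω => (ε i ω)^2) P := by
    intro i
    refine (hid_sq i).integrable_iff.mpr ?_
    refine (hint0 2 (by omega)).congr ?_
    filter_upwards with ω
    rw [sq_abs]
  have hint3_i : ∀ i, Integrable (fun ω => |ε i ω|^3) P :=
    fun i => (hid_abs i 3).integrable_iff.mpr (hint0 3 hr)
  have hintr_i : ∀ i, Integrable (fun ω => |ε i ω|^r) P :=
    fun i => (hid_abs i r).integrable_iff.mpr hmom
  have hs2_i : ∀ i, ∫ ω, (ε i ω)^2 ∂P = σ2 := fun i => (hid_sq i).integral_eq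
  have hm3_i : ∀ i, ∫ ω, |ε i ω|^3 ∂P = m3 := fun i => (hid_abs i 3).integral_eq
  have hEr_i : ∀ i, ∫ ω, |ε i ω|^r ∂P = Er := fun i => (hid_abs i r).integral_eq
  -- constants
  set Mp := |M| with hMp
  have hMp0 : 0 ≤ Mp := abs_nonneg M
  set V0 := σ2 * (1 + Mp) with hV0
  have hV00 : 0 ≤ V0 := by positivity
  set K := (r:ℝ) * (1 + V0) with hK
  have hKpos : 0 < K := by positivity
  set C3 := ((r:ℝ)/(2*K))^3 * m3 * (1 + Mp) with hC3
  have hC30 : 0 ≤ C3 := by positivity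
  have hlog2 : 0 < Real.log 2 := Real.log_pos one_lt_two
  set cy := ((K/(2*(r:ℝ))) * Real.sqrt (Real.log 2))^r with hcy
  have hcypos : 0 < cy := by
    apply pow_pos
    exact mul_pos (by positivity) (Real.sqrt_pos.mpr hlog2)
  set Cb := Er * Mp / cy + Real.exp 1 with hCb
  refine ⟨K, hKpos, ?_⟩
  rw [Asymptotics.isBigO_iff]
  refine ⟨2 * Cb, ?_⟩
  have hev2 : ∀ᶠ n : ℕ in atTop, (43*C3+1) * ((n:ℝ)^(-(1/8 : ℝ))) ≤ 1 := by
    have h0 : Tendsto (fun n : ℕ => (43*C3+1) * ((n:ℝ)^(-(1/8 : ℝ)))) atTop (nhds 0) := by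
      have h1 := (tendsto_rpow_neg_atTop (y := (1/8:ℝ)) (by norm_num)).comp
        (tendsto_natCast_atTop_atTop (R := ℝ))
      have := h1.const_mul (43*C3+1)
      simpa [Function.comp] using this
    exact h0.eventually_le_const (by norm_num)
  filter_upwards [eventually_ge_atTop 2, hev2] with n hn2 hev2n
  -- basic facts about n
  have hn0 : 0 < n := by omega
  have hnR : (0:ℝ) < (n:ℝ) := by exact_mod_cast hn0
  have hnR2 : (2:ℝ) ≤ (n:ℝ) := by exact_mod_cast hn2
  set L := Real.log (n:ℝ) with hL
  have hLpos : 0 < L := Real.log_pos (by linarith)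
  have hL2 : Real.log 2 ≤ L := Real.log_le_log (by norm_num) hnR2
  set sL := Real.sqrt L with hsL
  have hsLpos : 0 < sL := Real.sqrt_pos.mpr hLpos
  have hsLsq : sL * sL = L := Real.mul_self_sqrt hLpos.le
  set t := K * sL with ht
  set lam := ((r:ℝ)/(2*K)) * sL with hlam
  set y := (K/(2*(r:ℝ))) * sL with hy
  have hlampos : 0 < lam := by positivity
  have hypos : 0 < y := by positivity
  have hKne : K ≠ 0 := ne_of_gt hKpos
  have hrne : (r:ℝ) ≠ 0 := ne_of_gt hrpos
  have hlamy : lam * y = L/4 := by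
    rw [hlam, hy]
    field_simp
    linear_combination 4 * hsLsq
  have hlamt : lam * t = ((r:ℝ)/2) * L := by
    rw [hlam, ht]
    field_simp
    linear_combination hsLsq
  -- rpow arithmetic
  set ρ := (n:ℝ) ^ (-(1:ℝ)/2) with hρ
  have hρ0 : 0 ≤ ρ := Real.rpow_nonneg hnR.le _
  have hρk : ∀ k : ℕ, ρ^k = (n:ℝ)^((-(1:ℝ)/2) * k) := by
    intro k
    rw [hρ, ← Real.rpow_natCast ((n:ℝ)^(-(1:ℝ)/2)) k, ← Real.rpow_mul hnR.le]
  have hρn : ∀ k : ℕ, ρ^k * (n:ℝ) = (n:ℝ)^((-(1:ℝ)/2) * k + 1) := by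
    intro k
    rw [hρk k]
    nth_rewrite 2 [← Real.rpow_one (n:ℝ)]
    rw [← Real.rpow_add hnR]
  have hρ2n : ρ^2 * (n:ℝ) = 1 := by
    rw [hρn 2]; norm_num
  have hρ3n : ρ^3 * (n:ℝ) = (n:ℝ)^(-(1/2 : ℝ)) := by
    rw [hρn 3]; norm_num
  have hρrn : ρ^r * (n:ℝ) = (n:ℝ)^(-((r:ℝ)-2)/2) := by
    rw [hρn r]
    congr 1
    ring
  have hg0 : (0:ℝ) ≤ (n:ℝ)^(-((r:ℝ)-2)/2) := Real.rpow_nonneg hnR.le _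
  -- third-term smallness
  have hthird : Real.exp (lam * y) * lam^3 * (m3 * ((1 + Mp) * (n:ℝ)^(-(1/2:ℝ)))) ≤ 1 := by
    have hexp : Real.exp (lam * y) = (n:ℝ)^((1:ℝ)/4) := by
      rw [hlamy, Real.rpow_def_of_pos hnR, ← hL]
      congr 1; ring
    have hsL3 : sL^3 ≤ 43 * (n:ℝ)^((1:ℝ)/8) := by
      have hlog : L ≤ 12 * (n:ℝ)^((1:ℝ)/12) := by
        have := Real.log_le_rpow_div hnR.le (show (0:ℝ) < 1/12 by norm_num)
        rw [hL]
        calc Real.log (n:ℝ) ≤ (n:ℝ)^((1:ℝ)/12) / (1/12) := by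
              simpa using this
          _ = 12 * (n:ℝ)^((1:ℝ)/12) := by ring
      have h12 : (0:ℝ) ≤ 12 * (n:ℝ)^((1:ℝ)/12) := by positivity
      have hsLle : sL ≤ Real.sqrt 12 * (n:ℝ)^((1:ℝ)/24) := by
        calc sL ≤ Real.sqrt (12 * (n:ℝ)^((1:ℝ)/12)) := Real.sqrt_le_sqrt hlog
          _ = Real.sqrt 12 * Real.sqrt ((n:ℝ)^((1:ℝ)/12)) := Real.sqrt_mul (by norm_num) _
          _ = Real.sqrt 12 * (n:ℝ)^((1:ℝ)/24) := by
              congr 1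
              rw [Real.sqrt_eq_rpow, ← Real.rpow_mul hnR.le]
              norm_num
      have hs12 : Real.sqrt 12 ≤ 3.5 := by
        rw [show (3.5:ℝ) = Real.sqrt (3.5^2) from (Real.sqrt_sq (by norm_num)).symm]
        exact Real.sqrt_le_sqrt (by norm_num)
      calc sL^3 ≤ (Real.sqrt 12 * (n:ℝ)^((1:ℝ)/24))^3 :=
            pow_le_pow_left₀ hsLpos.le hsLle 3
        _ = (Real.sqrt 12)^3 * ((n:ℝ)^((1:ℝ)/24))^3 := by ring
        _ ≤ 3.5^3 * ((n:ℝ)^((1:ℝ)/24))^3 :=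
            mul_le_mul_of_nonneg_right (pow_le_pow_left₀ (Real.sqrt_nonneg 12) hs12 3)
              (by positivity)
        _ = 3.5^3 * (n:ℝ)^((1:ℝ)/8) := by
            rw [← Real.rpow_natCast ((n:ℝ)^((1:ℝ)/24)) 3, ← Real.rpow_mul hnR.le]
            norm_num
        _ ≤ 43 * (n:ℝ)^((1:ℝ)/8) :=
            mul_le_mul_of_nonneg_right (by norm_num) (Real.rpow_nonneg hnR.le _)
    have hlam3 : lam^3 = ((r:ℝ)/(2*K))^3 * sL^3 := by rw [hlam]; ring
    calc Real.exp (lam * y) * lam^3 * (m3 * ((1 + Mp) * (n:ℝ)^(-(1/2:ℝ))))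
        = ((r:ℝ)/(2*K))^3 * m3 * (1+Mp) * sL^3 * ((n:ℝ)^((1:ℝ)/4) * (n:ℝ)^(-(1/2:ℝ))) := by
          rw [hexp, hlam3]; ring
      _ = C3 * sL^3 * (n:ℝ)^(-(1/4:ℝ)) := by
          rw [← Real.rpow_add hnR, hC3]
          norm_num
      _ ≤ C3 * (43 * (n:ℝ)^((1:ℝ)/8)) * (n:ℝ)^(-(1/4:ℝ)) :=
          mul_le_mul_of_nonneg_right (mul_le_mul_of_nonneg_left hsL3 hC30)
            (Real.rpow_nonneg hnR.le _)
      _ = (43 * C3) * ((n:ℝ)^((1:ℝ)/8) * (n:ℝ)^(-(1/4:ℝ))) := by ring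
      _ = (43 * C3) * (n:ℝ)^(-(1/8:ℝ)) := by
          rw [← Real.rpow_add hnR]
          norm_num
      _ ≤ 1 := by
          have h0 : (0:ℝ) ≤ (n:ℝ)^(-(1/8:ℝ)) := Real.rpow_nonneg hnR.le _
          have h1 : (43*C3) * (n:ℝ)^(-(1/8:ℝ)) ≤ (43*C3+1) * (n:ℝ)^(-(1/8:ℝ)) :=
            mul_le_mul_of_nonneg_right (by linarith only []) h0
          exact h1.trans hev2n
  -- core single-sum bound
  have hcore : ∀ j : Fin (p n), ∀ b : ℕ → ℝ,
      (∑ i ∈ range n, |b i|^r = ρ^r * ∑ i : Fin n, |x n i j|^r) →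
      (∑ i ∈ range n, (b i)^2 = ρ^2 * ∑ i : Fin n, (x n i j)^2) →
      (∑ i ∈ range n, |b i|^3 = ρ^3 * ∑ i : Fin n, |x n i j|^3) →
      (P {ω | t < ∑ i ∈ range n, b i * ε i ω}).toReal ≤ Cb * (n:ℝ)^(-((r:ℝ)-2)/2) := by
    intro j b hbr hb2 hb3
    -- design sums
    have hxr : ∑ i : Fin n, |x n i j|^r ≤ (n:ℝ) * M := by
      have h := hx n hn0 j
      have := mul_le_mul_of_nonneg_left h hnR.le
      calc ∑ i : Fin n, |x n i j|^r
          = (n:ℝ) * ((n:ℝ)⁻¹ * ∑ i : Fin n, |x n i j|^r) := by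
            field_simp
        _ ≤ (n:ℝ) * M := this
    have hMnn : 0 ≤ M := by
      have h := hx n hn0 j
      have hs : (0:ℝ) ≤ ∑ i : Fin n, |x n i j|^r := Finset.sum_nonneg fun i _ => by positivity
      have h0 : (0:ℝ) ≤ (n:ℝ)⁻¹ * ∑ i : Fin n, |x n i j|^r :=
        mul_nonneg (inv_nonneg.mpr hnR.le) hs
      linarith only [h0, h]
    have hMep : M ≤ Mp := le_abs_self M
    have hx2 : ∑ i : Fin n, (x n i j)^2 ≤ (n:ℝ) * (1 + Mp) := by
      calc ∑ i : Fin n, (x n i j)^2 ≤ ∑ i : Fin n, (1 + |x n i j|^r) := by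
            refine Finset.sum_le_sum fun i _ => ?_
            rw [← sq_abs]
            exact habs_bound 2 (by omega) _
        _ = (n:ℝ) + ∑ i : Fin n, |x n i j|^r := by
            rw [Finset.sum_add_distrib]; simp
        _ ≤ (n:ℝ) + (n:ℝ) * M := by linarith only [hxr]
        _ ≤ (n:ℝ) + (n:ℝ) * Mp := by
            linarith only [mul_le_mul_of_nonneg_left hMep hnR.le]
        _ = (n:ℝ) * (1 + Mp) := by ring
    have hx3 : ∑ i : Fin n, |x n i j|^3 ≤ (n:ℝ) * (1 + Mp) := by
      calc ∑ i : Fin n, |x n i j|^3 ≤ ∑ i : Fin n, (1 + |x n i j|^r) :=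
            Finset.sum_le_sum fun i _ => habs_bound 3 hr _
        _ = (n:ℝ) + ∑ i : Fin n, |x n i j|^r := by
            rw [Finset.sum_add_distrib]; simp
        _ ≤ (n:ℝ) + (n:ℝ) * M := by linarith only [hxr]
        _ ≤ (n:ℝ) + (n:ℝ) * Mp := by
            linarith only [mul_le_mul_of_nonneg_left hMep hnR.le]
        _ = (n:ℝ) * (1 + Mp) := by ring
    have htb := tail_bound P ε hmeas hindep hint1 hmean_i hint2_i hint3_i r hintr_i
      n b t lam y hlampos hypos
    have e1 : ∑ i ∈ range n, |b i|^r * ∫ ω, |ε i ω|^r ∂P = Er * ∑ i ∈ range n, |b i|^r := by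
      rw [Finset.mul_sum]
      exact Finset.sum_congr rfl fun i _ => by rw [hEr_i i]; ring
    have e2 : ∑ i ∈ range n, (b i)^2 * ∫ ω, (ε i ω)^2 ∂P = σ2 * ∑ i ∈ range n, (b i)^2 := by
      rw [Finset.mul_sum]
      exact Finset.sum_congr rfl fun i _ => by rw [hs2_i i]; ring
    have e3 : ∑ i ∈ range n, |b i|^3 * ∫ ω, |ε i ω|^3 ∂P = m3 * ∑ i ∈ range n, |b i|^3 := by
      rw [Finset.mul_sum]
      exact Finset.sum_congr rfl fun i _ => by rw [hm3_i i]; ring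
    rw [e1, e2, e3, hbr, hb2, hb3] at htb
    refine htb.trans ?_
    -- bound term 1
    have hterm1 : Er * (ρ^r * ∑ i : Fin n, |x n i j|^r) / y^r
        ≤ (Er * Mp / cy) * (n:ℝ)^(-((r:ℝ)-2)/2) := by
      have hnum : Er * (ρ^r * ∑ i : Fin n, |x n i j|^r) ≤ (Er * Mp) * (n:ℝ)^(-((r:ℝ)-2)/2) := by
        have hρr0 : (0:ℝ) ≤ ρ^r := by positivity
        have h1 : ρ^r * ∑ i : Fin n, |x n i j|^r ≤ ρ^r * ((n:ℝ) * M) :=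
          mul_le_mul_of_nonneg_left hxr hρr0
        have h3 : (ρ^r * (n:ℝ)) * M ≤ (ρ^r * (n:ℝ)) * Mp :=
          mul_le_mul_of_nonneg_left hMep (by positivity)
        calc Er * (ρ^r * ∑ i : Fin n, |x n i j|^r)
            ≤ Er * (ρ^r * ((n:ℝ) * M)) := mul_le_mul_of_nonneg_left h1 hEr0
          _ = Er * ((ρ^r * (n:ℝ)) * M) := by ring
          _ ≤ Er * ((ρ^r * (n:ℝ)) * Mp) := mul_le_mul_of_nonneg_left h3 hEr0
          _ = (Er * Mp) * (ρ^r * (n:ℝ)) := by ring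
          _ = (Er * Mp) * (n:ℝ)^(-((r:ℝ)-2)/2) := by rw [hρrn]
      have hyr : cy ≤ y^r := by
        rw [hcy, hy]
        refine pow_le_pow_left₀ (by positivity) ?_ r
        exact mul_le_mul_of_nonneg_left (Real.sqrt_le_sqrt hL2) (by positivity)
      calc Er * (ρ^r * ∑ i : Fin n, |x n i j|^r) / y^r
          ≤ (Er * Mp) * (n:ℝ)^(-((r:ℝ)-2)/2) / y^r := by
            exact (div_le_div_iff_of_pos_right (lt_of_lt_of_le hcypos hyr)).mpr hnum
        _ ≤ (Er * Mp) * (n:ℝ)^(-((r:ℝ)-2)/2) / cy := by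
            apply div_le_div_of_nonneg_left (by positivity) hcypos hyr
        _ = (Er * Mp / cy) * (n:ℝ)^(-((r:ℝ)-2)/2) := by ring
    -- bound term 2
    have hterm2 : Real.exp (-lam*t) * Real.exp (lam^2 * (σ2 * (ρ^2 * ∑ i : Fin n, (x n i j)^2))/2
          + Real.exp (lam*y) * lam^3 * (m3 * (ρ^3 * ∑ i : Fin n, |x n i j|^3)))
        ≤ Real.exp 1 * (n:ℝ)^(-((r:ℝ)-2)/2) := by
      have hqa : lam^2 * (σ2 * (ρ^2 * ∑ i : Fin n, (x n i j)^2))/2 ≤ L := by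
        have h1 : σ2 * (ρ^2 * ∑ i : Fin n, (x n i j)^2) ≤ V0 := by
          have hρ20 : (0:ℝ) ≤ ρ^2 := by positivity
          have h2 : ρ^2 * ∑ i : Fin n, (x n i j)^2 ≤ ρ^2 * ((n:ℝ) * (1+Mp)) :=
            mul_le_mul_of_nonneg_left hx2 hρ20
          have h3 : ρ^2 * ((n:ℝ) * (1+Mp)) = (ρ^2 * (n:ℝ)) * (1+Mp) := by ring
          rw [h3, hρ2n, one_mul] at h2
          rw [hV0]
          exact mul_le_mul_of_nonneg_left h2 hs20
        have hlamsq : lam^2 = ((r:ℝ)/(2*K))^2 * L := by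
          rw [hlam, mul_pow]
          congr 1
          rw [sq, hsLsq]
        have hcoef : ((r:ℝ)/(2*K))^2 * V0 / 2 ≤ 1 := by
          have h1 : (r:ℝ)/(2*K) = 1/(2*(1+V0)) := by
            rw [hK]
            field_simp
          rw [h1, div_pow, one_pow, div_mul_eq_mul_div, div_div, div_le_one (by positivity)]
          nlinarith only [hV00, sq_nonneg V0]
        have hq0 : 0 ≤ σ2 * (ρ^2 * ∑ i : Fin n, (x n i j)^2) := by
          have : (0:ℝ) ≤ ∑ i : Fin n, (x n i j)^2 := Finset.sum_nonneg fun i _ => sq_nonneg _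
          positivity
        calc lam^2 * (σ2 * (ρ^2 * ∑ i : Fin n, (x n i j)^2))/2
            ≤ lam^2 * V0 / 2 := by
              have h5 := mul_le_mul_of_nonneg_left h1 (sq_nonneg lam)
              linarith only [h5]
          _ = (((r:ℝ)/(2*K))^2 * V0 / 2) * L := by rw [hlamsq]; ring
          _ ≤ 1 * L := mul_le_mul_of_nonneg_right hcoef hLpos.le
          _ = L := one_mul L
      have hqb : Real.exp (lam*y) * lam^3 * (m3 * (ρ^3 * ∑ i : Fin n, |x n i j|^3)) ≤ 1 := by
        refine le_trans ?_ hthird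
        have hmono1 : m3 * (ρ^3 * ∑ i : Fin n, |x n i j|^3)
            ≤ m3 * ((1 + Mp) * (n:ℝ)^(-(1/2:ℝ))) := by
          have hρ30 : (0:ℝ) ≤ ρ^3 := by positivity
          have h2 : ρ^3 * ∑ i : Fin n, |x n i j|^3 ≤ ρ^3 * ((n:ℝ) * (1+Mp)) :=
            mul_le_mul_of_nonneg_left hx3 hρ30
          have h3 : ρ^3 * ((n:ℝ) * (1+Mp)) = (ρ^3 * (n:ℝ)) * (1+Mp) := by ring
          rw [h3, hρ3n] at h2
          calc m3 * (ρ^3 * ∑ i : Fin n, |x n i j|^3)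
              ≤ m3 * ((n:ℝ)^(-(1/2:ℝ)) * (1+Mp)) := mul_le_mul_of_nonneg_left h2 hm30
            _ = m3 * ((1 + Mp) * (n:ℝ)^(-(1/2:ℝ))) := by ring
        exact mul_le_mul_of_nonneg_left hmono1 (by positivity)
      rw [← Real.exp_add]
      have hexple : -lam*t + (lam^2 * (σ2 * (ρ^2 * ∑ i : Fin n, (x n i j)^2))/2
          + Real.exp (lam*y) * lam^3 * (m3 * (ρ^3 * ∑ i : Fin n, |x n i j|^3)))
          ≤ 1 + (1 - (r:ℝ)/2) * L := by
        have : -lam*t = -(((r:ℝ)/2) * L) := by rw [← hlamt]; ring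
        rw [this]
        linarith only [hqa, hqb]
      calc Real.exp (-lam*t + (lam^2 * (σ2 * (ρ^2 * ∑ i : Fin n, (x n i j)^2))/2
            + Real.exp (lam*y) * lam^3 * (m3 * (ρ^3 * ∑ i : Fin n, |x n i j|^3))))
          ≤ Real.exp (1 + (1 - (r:ℝ)/2) * L) := Real.exp_le_exp.mpr hexple
        _ = Real.exp 1 * Real.exp ((1 - (r:ℝ)/2) * L) := Real.exp_add _ _
        _ = Real.exp 1 * (n:ℝ)^(-((r:ℝ)-2)/2) := by
            congr 1
            rw [Real.rpow_def_of_pos hnR, ← hL]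
            congr 1
            ring
    calc Er * (ρ^r * ∑ i : Fin n, |x n i j|^r) / y^r
          + Real.exp (-lam*t) * Real.exp (lam^2 * (σ2 * (ρ^2 * ∑ i : Fin n, (x n i j)^2))/2
            + Real.exp (lam*y) * lam^3 * (m3 * (ρ^3 * ∑ i : Fin n, |x n i j|^3)))
        ≤ (Er * Mp / cy) * (n:ℝ)^(-((r:ℝ)-2)/2) + Real.exp 1 * (n:ℝ)^(-((r:ℝ)-2)/2) :=
          add_le_add hterm1 hterm2
      _ = Cb * (n:ℝ)^(-((r:ℝ)-2)/2) := by rw [hCb]; ring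
  -- per-coordinate coefficient vectors
  set bf : Fin (p n) → ℕ → ℝ := fun j i => if h : i < n then ρ * x n ⟨i,h⟩ j else 0 with hbf
  have hbf_eq : ∀ j (ω : Ω), (n:ℝ)^(-(1:ℝ)/2) * ∑ i : Fin n, x n i j * ε i ω
      = ∑ i ∈ range n, bf j i * ε i ω := by
    intro j ω
    rw [← hρ, Finset.mul_sum]
    rw [← Fin.sum_univ_eq_sum_range (fun i => bf j i * ε i ω) n]
    refine Finset.sum_congr rfl fun i _ => ?_
    rw [hbf]
    simp only [Fin.is_lt, dif_pos, Fin.eta]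
    ring
  have hbf_sums : ∀ j (k : ℕ), ∑ i ∈ range n, |bf j i|^k = ρ^k * ∑ i : Fin n, |x n i j|^k := by
    intro j k
    rw [Finset.mul_sum]
    rw [← Fin.sum_univ_eq_sum_range (fun i => |bf j i|^k) n]
    refine Finset.sum_congr rfl fun i _ => ?_
    rw [hbf]
    simp only [Fin.is_lt, dif_pos, Fin.eta]
    rw [abs_mul, abs_of_nonneg hρ0, mul_pow]
  have hbf_sq : ∀ j, ∑ i ∈ range n, (bf j i)^2 = ρ^2 * ∑ i : Fin n, (x n i j)^2 := by
    intro j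
    have h1 := hbf_sums j 2
    calc ∑ i ∈ range n, (bf j i)^2 = ∑ i ∈ range n, |bf j i|^2 := by
          exact Finset.sum_congr rfl fun i _ => (sq_abs _).symm
      _ = ρ^2 * ∑ i : Fin n, |x n i j|^2 := h1
      _ = ρ^2 * ∑ i : Fin n, (x n i j)^2 := by
          congr 1
          exact Finset.sum_congr rfl fun i _ => sq_abs _
  -- event inclusion and union bound
  set Ap : Fin (p n) → Set Ω := fun j => {ω | t < ∑ i ∈ range n, bf j i * ε i ω} with hAp
  set Am : Fin (p n) → Set Ω := fun j => {ω | t < ∑ i ∈ range n, (-(bf j i)) * ε i ω} with hAm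
  have hsub : {ω | ∃ j : Fin (p n),
      K * Real.sqrt (Real.log n) < |(n : ℝ) ^ (-(1 : ℝ) / 2) * ∑ i : Fin n, x n i j * ε i ω|}
      ⊆ ⋃ j : Fin (p n), (Ap j ∪ Am j) := by
    intro ω hω
    obtain ⟨j, hj⟩ := hω
    rw [hbf_eq j ω] at hj
    refine Set.mem_iUnion.mpr ⟨j, ?_⟩
    rcases lt_abs.mp hj with h | h
    · exact Or.inl h
    · right
      rw [hAm]
      simp only [Set.mem_setOf_eq]
      calc t = K * Real.sqrt (Real.log n) := by rw [ht, hsL, hL]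
        _ < -∑ i ∈ range n, bf j i * ε i ω := h
        _ = ∑ i ∈ range n, (-(bf j i)) * ε i ω := by
            rw [← Finset.sum_neg_distrib]
            exact Finset.sum_congr rfl fun i _ => by ring
  have hperj : ∀ j : Fin (p n),
      (P (Ap j)).toReal + (P (Am j)).toReal ≤ 2 * Cb * (n:ℝ)^(-((r:ℝ)-2)/2) := by
    intro j
    have h1 : (P (Ap j)).toReal ≤ Cb * (n:ℝ)^(-((r:ℝ)-2)/2) :=
      hcore j (bf j) (hbf_sums j r) (hbf_sq j) (hbf_sums j 3)
    have h2 : (P (Am j)).toReal ≤ Cb * (n:ℝ)^(-((r:ℝ)-2)/2) := by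
      refine hcore j (fun i => -(bf j i)) ?_ ?_ ?_
      · simpa [abs_neg] using hbf_sums j r
      · simpa [neg_sq] using hbf_sq j
      · simpa [abs_neg] using hbf_sums j 3
    linarith only [h1, h2]
  -- final combination
  have hmain : (P {ω | ∃ j : Fin (p n),
      K * Real.sqrt (Real.log n) < |(n : ℝ) ^ (-(1 : ℝ) / 2) * ∑ i : Fin n, x n i j * ε i ω|}).toReal
      ≤ ∑ j : Fin (p n), ((P (Ap j)).toReal + (P (Am j)).toReal) := by
    have h1 : P {ω | ∃ j : Fin (p n),
        K * Real.sqrt (Real.log n) < |(n : ℝ) ^ (-(1 : ℝ) / 2) * ∑ i : Fin n, x n i j * ε i ω|}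
        ≤ ∑ j : Fin (p n), (P (Ap j) + P (Am j)) := by
      refine (measure_mono hsub).trans ?_
      refine (measure_iUnion_fintype_le P _).trans ?_
      exact Finset.sum_le_sum fun j _ => measure_union_le _ _
    have hne : (∑ j : Fin (p n), (P (Ap j) + P (Am j))) ≠ ⊤ :=
      (ENNReal.sum_lt_top.mpr fun j _ =>
        ENNReal.add_lt_top.mpr ⟨measure_lt_top P _, measure_lt_top P _⟩).ne
    calc (P {ω | ∃ j : Fin (p n),
        K * Real.sqrt (Real.log n) < |(n : ℝ) ^ (-(1 : ℝ) / 2) * ∑ i : Fin n, x n i j * ε i ω|}).toReal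
        ≤ (∑ j : Fin (p n), (P (Ap j) + P (Am j))).toReal := ENNReal.toReal_mono hne h1
      _ = ∑ j : Fin (p n), ((P (Ap j)).toReal + (P (Am j)).toReal) := by
          rw [ENNReal.toReal_sum fun j _ => (ENNReal.add_lt_top.mpr
            ⟨measure_lt_top P _, measure_lt_top P _⟩).ne]
          exact Finset.sum_congr rfl fun j _ =>
            ENNReal.toReal_add (measure_ne_top _ _) (measure_ne_top _ _)
  rw [Real.norm_eq_abs, Real.norm_eq_abs, abs_of_nonneg ENNReal.toReal_nonneg,
    abs_of_nonneg (by positivity : (0:ℝ) ≤ (p n : ℝ) * (n:ℝ)^(-((r:ℝ)-2)/2))]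
  calc (P {ω | ∃ j : Fin (p n),
      K * Real.sqrt (Real.log n) < |(n : ℝ) ^ (-(1 : ℝ) / 2) * ∑ i : Fin n, x n i j * ε i ω|}).toReal
      ≤ ∑ j : Fin (p n), ((P (Ap j)).toReal + (P (Am j)).toReal) := hmain
    _ ≤ ∑ _j : Fin (p n), 2 * Cb * (n:ℝ)^(-((r:ℝ)-2)/2) :=
        Finset.sum_le_sum fun j _ => hperj j
    _ = (p n : ℝ) * (2 * Cb * (n:ℝ)^(-((r:ℝ)-2)/2)) := by
        rw [Finset.sum_const, Finset.card_univ, Fintype.card_fin, nsmul_eq_mul]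
    _ = 2 * Cb * ((p n : ℝ) * (n:ℝ)^(-((r:ℝ)-2)/2)) := by ring
end
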